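/- arXiv:2605.00614 — 5 statements merged into one kernel-verified Lean document; each statement's English description precedes it below -/
import Mathlib

section
/- Let λ be an N×R⁰ matrix, f a T×R⁰ matrix, Λ an N×R matrix, F a T×R matrix, and W an N×T matrix. Then ‖λ f' − Λ F' − W‖²_HS ≥ Tr(M_F W' M_λ W M_F) = ‖M_λ W M_F‖²_HS. -/
open Matrix MeasureTheory
open scoped BigOperators

/-- Squared Frobenius (Hilbert–Schmidt) norm of a real matrix. -/
noncomputable def frobSq {n m : ℕ} (A : Matrix (Fin n) (Fin m) ℝ) : ℝ :=
  Matrix.trace (A * Aᵀ)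

/-- Operator (spectral) norm of a real matrix. -/
noncomputable def opNorm {n m : ℕ} (A : Matrix (Fin n) (Fin m) ℝ) : ℝ :=
  ‖LinearMap.toContinuousLinearMap (Matrix.toEuclideanLin A)‖

/-- Orthogonal projection matrix onto the column space of `A`. -/
noncomputable def projMat {n m : ℕ} (A : Matrix (Fin n) (Fin m) ℝ) : Matrix (Fin n) (Fin n) ℝ :=
  Matrix.toEuclideanLin.symm
    (((LinearMap.range (Matrix.toEuclideanLin A)).subtypeL.comp
      (Submodule.orthogonalProjectionOnto (LinearMap.range (Matrix.toEuclideanLin A))) :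
        EuclideanSpace ℝ (Fin n) →L[ℝ] EuclideanSpace ℝ (Fin n)) :
        EuclideanSpace ℝ (Fin n) →ₗ[ℝ] EuclideanSpace ℝ (Fin n))

/-- Annihilator `M_A = I - P_A`. -/
noncomputable def annMat {n m : ℕ} (A : Matrix (Fin n) (Fin m) ℝ) : Matrix (Fin n) (Fin n) ℝ :=
  1 - projMat A

/-- `mu S r` is the `r`-th largest eigenvalue (1-based, with multiplicity) of the
symmetric matrix `S`; it is `0` if `S` is not symmetric or `r ∉ {1,…,n}`. -/
noncomputable def mu {n : ℕ} (S : Matrix (Fin n) (Fin n) ℝ) (r : ℕ) : ℝ :=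
  if h : S.IsHermitian ∧ 1 ≤ r ∧ r ≤ n then
    (h.1.eigenvalues ∘ Tuple.sort h.1.eigenvalues)
      (Fin.rev ⟨r - 1, by obtain ⟨-, h1, h2⟩ := h; omega⟩)
  else 0

lemma toEuclideanLin_projMat {n m : ℕ} (A : Matrix (Fin n) (Fin m) ℝ) :
    Matrix.toEuclideanLin (projMat A) =
    (((LinearMap.range (Matrix.toEuclideanLin A)).subtypeL.comp
      (Submodule.orthogonalProjectionOnto (LinearMap.range (Matrix.toEuclideanLin A))) :
        EuclideanSpace ℝ (Fin n) →L[ℝ] EuclideanSpace ℝ (Fin n)) :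
        EuclideanSpace ℝ (Fin n) →ₗ[ℝ] EuclideanSpace ℝ (Fin n)) :=
  LinearEquiv.apply_symm_apply _ _

lemma toEuclideanLin_mul {n m k : ℕ} (A : Matrix (Fin n) (Fin m) ℝ)
    (B : Matrix (Fin m) (Fin k) ℝ) :
    Matrix.toEuclideanLin (A * B) =
      (Matrix.toEuclideanLin A).comp (Matrix.toEuclideanLin B) := by
  simp only [Matrix.toEuclideanLin_eq_toLin]
  exact Matrix.toLin_mul _ (PiLp.basisFun 2 ℝ (Fin m)) _ A B

lemma projMat_transpose {n m : ℕ} (A : Matrix (Fin n) (Fin m) ℝ) :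
    (projMat A)ᵀ = projMat A := by
  have h : (projMat A).IsHermitian := by
    rw [Matrix.isHermitian_iff_isSymmetric, toEuclideanLin_projMat]
    exact Submodule.starProjection_isSymmetric _
  rw [← Matrix.conjTranspose_eq_transpose_of_trivial]
  exact h

lemma projMat_idem {n m : ℕ} (A : Matrix (Fin n) (Fin m) ℝ) :
    projMat A * projMat A = projMat A := by
  apply Matrix.toEuclideanLin.injective
  rw [toEuclideanLin_mul, toEuclideanLin_projMat]
  ext v
  simp [Submodule.starProjection_eq_self_iff.mpr
    (Submodule.starProjection_apply_mem (LinearMap.range (Matrix.toEuclideanLin A)) v)]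

lemma projMat_mul_self {n m : ℕ} (A : Matrix (Fin n) (Fin m) ℝ) :
    projMat A * A = A := by
  apply Matrix.toEuclideanLin.injective
  rw [toEuclideanLin_mul, toEuclideanLin_projMat]
  ext v
  simp only [LinearMap.comp_apply, ContinuousLinearMap.coe_coe,
    ContinuousLinearMap.comp_apply, Submodule.subtypeL_apply]
  rw [← Submodule.starProjection_apply,
    Submodule.starProjection_eq_self_iff.2 (LinearMap.mem_range_self (Matrix.toEuclideanLin A) _)]

lemma annMat_transpose {n m : ℕ} (A : Matrix (Fin n) (Fin m) ℝ) :
    (annMat A)ᵀ = annMat A := by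
  simp [annMat, Matrix.transpose_sub, projMat_transpose]

lemma annMat_idem {n m : ℕ} (A : Matrix (Fin n) (Fin m) ℝ) :
    annMat A * annMat A = annMat A := by
  simp [annMat, Matrix.mul_sub, Matrix.sub_mul, projMat_idem]

lemma annMat_mul_self {n m : ℕ} (A : Matrix (Fin n) (Fin m) ℝ) :
    annMat A * A = 0 := by
  simp [annMat, Matrix.sub_mul, projMat_mul_self]

lemma frobSq_eq_sum {n m : ℕ} (A : Matrix (Fin n) (Fin m) ℝ) :
    frobSq A = ∑ i, ∑ j, (A i j) ^ 2 := by
  simp [frobSq, Matrix.trace, Matrix.mul_apply, Matrix.diag, sq]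

lemma frobSq_nonneg {n m : ℕ} (A : Matrix (Fin n) (Fin m) ℝ) : 0 ≤ frobSq A := by
  rw [frobSq_eq_sum]
  positivity

lemma frobSq_neg {n m : ℕ} (A : Matrix (Fin n) (Fin m) ℝ) : frobSq (-A) = frobSq A := by
  simp [frobSq_eq_sum]

lemma frobSq_mul_right_le {n m : ℕ} (X : Matrix (Fin n) (Fin m) ℝ)
    (Q : Matrix (Fin m) (Fin m) ℝ) (hQt : Qᵀ = Q) (hQ2 : Q * Q = Q) :
    frobSq (X * Q) ≤ frobSq X := by
  have hA : frobSq (X * Q) = Matrix.trace (X * Q * Xᵀ) := by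
    rw [frobSq, Matrix.transpose_mul, hQt, ← Matrix.mul_assoc, Matrix.mul_assoc X Q Q, hQ2]
  have hB : frobSq (X * (1 - Q)) = Matrix.trace (X * Xᵀ) - Matrix.trace (X * Q * Xᵀ) := by
    rw [frobSq, Matrix.transpose_mul, Matrix.transpose_sub, Matrix.transpose_one, hQt,
      ← Matrix.mul_assoc, Matrix.mul_assoc X (1 - Q) (1 - Q)]
    have h : (1 - Q) * (1 - Q) = 1 - Q := by
      simp [Matrix.mul_sub, Matrix.sub_mul, hQ2]
    rw [h, Matrix.mul_sub, Matrix.mul_one, Matrix.sub_mul, Matrix.trace_sub]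
  have hX : frobSq X = Matrix.trace (X * Xᵀ) := rfl
  have h2 := frobSq_nonneg (X * (1 - Q))
  linarith

lemma frobSq_mul_left_le {n m : ℕ} (X : Matrix (Fin n) (Fin m) ℝ)
    (Q : Matrix (Fin n) (Fin n) ℝ) (hQt : Qᵀ = Q) (hQ2 : Q * Q = Q) :
    frobSq (Q * X) ≤ frobSq X := by
  have key : ∀ (Y : Matrix (Fin n) (Fin m) ℝ), frobSq Y = frobSq Yᵀ := by
    intro Y
    simp only [frobSq_eq_sum, Matrix.transpose_apply]
    exact Finset.sum_comm
  rw [key, Matrix.transpose_mul, key X, hQt]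
  exact frobSq_mul_right_le Xᵀ Q hQt hQ2

/-- For any N×R⁰ matrix λ, T×R⁰ matrix f, N×R matrix Λ, T×R matrix F and
N×T matrix W: ‖λf' − ΛF' − W‖²_HS ≥ Tr(M_F W' M_λ W M_F) = ‖M_λ W M_F‖²_HS. -/
theorem statement1 {N T R0 R : ℕ}
    (lam : Matrix (Fin N) (Fin R0) ℝ) (f : Matrix (Fin T) (Fin R0) ℝ)
    (Λ : Matrix (Fin N) (Fin R) ℝ) (F : Matrix (Fin T) (Fin R) ℝ)
    (W : Matrix (Fin N) (Fin T) ℝ) :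
    frobSq (lam * fᵀ - Λ * Fᵀ - W) ≥
      Matrix.trace (annMat F * Wᵀ * annMat lam * W * annMat F) ∧
    Matrix.trace (annMat F * Wᵀ * annMat lam * W * annMat F) =
      frobSq (annMat lam * W * annMat F) := by
  set Ml := annMat lam with hMl
  set MF := annMat F with hMF
  have h1 : Ml * lam = 0 := annMat_mul_self lam
  have h2 : Fᵀ * MF = 0 := by
    have := congrArg Matrix.transpose (annMat_mul_self F)
    rwa [Matrix.transpose_mul, annMat_transpose, Matrix.transpose_zero] at this
  -- equality part
  have heq : Matrix.trace (MF * Wᵀ * Ml * W * MF) = frobSq (Ml * W * MF) := by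
    have hrw : MF * Wᵀ * Ml * W * MF = (Ml * W * MF)ᵀ * (Ml * W * MF) := by
      rw [Matrix.transpose_mul, Matrix.transpose_mul, annMat_transpose, annMat_transpose]
      simp only [← Matrix.mul_assoc]
      rw [Matrix.mul_assoc (MF * Wᵀ) Ml Ml, annMat_idem]
    rw [hrw, Matrix.trace_mul_comm]
    rfl
  refine ⟨?_, heq⟩
  rw [heq]
  -- inequality part
  have hX : Ml * (lam * fᵀ - Λ * Fᵀ - W) * MF = -(Ml * W * MF) := by
    have e1 : Ml * (lam * fᵀ) * MF = 0 := by
      rw [← Matrix.mul_assoc, h1, Matrix.zero_mul, Matrix.zero_mul]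
    have e2 : Ml * (Λ * Fᵀ) * MF = 0 := by
      rw [Matrix.mul_assoc, Matrix.mul_assoc, h2, Matrix.mul_zero, Matrix.mul_zero]
    rw [Matrix.mul_sub, Matrix.mul_sub, Matrix.sub_mul, Matrix.sub_mul, e1, e2]
    simp
  calc frobSq (Ml * W * MF) = frobSq (Ml * (lam * fᵀ - Λ * Fᵀ - W) * MF) := by
        rw [hX, frobSq_neg]
    _ ≤ frobSq (Ml * (lam * fᵀ - Λ * Fᵀ - W)) :=
        frobSq_mul_right_le _ _ (annMat_transpose F) (annMat_idem F)
    _ ≤ frobSq (lam * fᵀ - Λ * Fᵀ - W) :=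
        frobSq_mul_left_le _ _ (annMat_transpose lam) (annMat_idem lam)
end

section
/- Let W, e, L be N×T matrices with rank(L) ≤ R⁰, and let R, R⁰ be nonnegative integers with R + R⁰ ≤ T. Then Σ_{r=R+1}^{T} μ_r[(W + e + L)'(W + e + L)] ≥ Σ_{r=R+R⁰+1}^{T} μ_r(W'W) + Tr(e e') − 2(R+R⁰)‖e‖² + 2 Tr(W e') − 2(R+R⁰)‖e‖·‖W‖. -/
open Matrix MeasureTheory
open scoped BigOperators

section Auxiliary

open scoped RealInnerProductSpace
open Submodule

/-- Reinterpret a plain vector as an element of Euclidean space. -/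
def toE {n : ℕ} (v : Fin n → ℝ) : EuclideanSpace ℝ (Fin n) := WithLp.toLp 2 v

variable {N T : ℕ}

lemma sum_mu_eq {T : ℕ} (S : Matrix (Fin T) (Fin T) ℝ) (hS : S.IsHermitian) (R : ℕ)
    (hR : R ≤ T) :
    ∑ r ∈ Finset.Icc (R + 1) T, mu S r
      = ∑ j ∈ Finset.univ.filter (fun j : Fin T => (j : ℕ) < T - R),
          hS.eigenvalues (Tuple.sort hS.eigenvalues j) := by
  refine Finset.sum_bij' (i := fun r hr => (⟨T - r, ?_⟩ : Fin T))
    (j := fun j hj => T - (j : ℕ)) ?_ ?_ ?_ ?_ ?_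
  · simp only [Finset.mem_Icc] at hr; omega
  · intro r hr; simp only [Finset.mem_Icc] at hr
    simp only [Finset.mem_filter, Finset.mem_univ, true_and]; omega
  · intro j hj; simp only [Finset.mem_filter, Finset.mem_univ, true_and] at hj
    simp only [Finset.mem_Icc]; omega
  · intro r hr; simp only [Finset.mem_Icc] at hr; simp only []; omega
  · intro j hj; simp only [Finset.mem_filter, Finset.mem_univ, true_and] at hj
    ext
    simp only []
    omega
  · intro r hr
    simp only [Finset.mem_Icc] at hr
    rw [mu, dif_pos ⟨hS, by omega, hr.2⟩]
    have hrev : (Fin.rev ⟨r - 1, by omega⟩ : Fin T) = ⟨T - r, by omega⟩ := by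
      ext; simp only [Fin.val_rev]; omega
    simp only [Function.comp, hrev]

lemma card_filter_lt {T m : ℕ} (hm : m ≤ T) :
    (Finset.univ.filter (fun j : Fin T => (j : ℕ) < m)).card = m := by
  have h : (Finset.univ.filter (fun j : Fin T => (j : ℕ) < m)).card
      = (Finset.range m).card := by
    refine Finset.card_bij' (i := fun j _ => (j : ℕ)) (j := fun i hi => ⟨i, ?_⟩) ?_ ?_ ?_ ?_
    · simp only [Finset.mem_range] at hi; omega
    · intro a ha; simp only [Finset.mem_filter, Finset.mem_univ, true_and] at ha
      simpa using ha
    · intro a ha; simp only [Finset.mem_range] at ha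
      simp only [Finset.mem_filter, Finset.mem_univ, true_and]; exact ha
    · intro a ha; rfl
    · intro a ha; rfl
  simpa using h

lemma kyfan_low {T : ℕ} (lam d : Fin T → ℝ) (hd0 : ∀ j, 0 ≤ d j) (hd1 : ∀ j, d j ≤ 1)
    (m : ℕ) (hm : m ≤ T) (hsum : ∑ j, d j = (m : ℝ)) :
    ∑ j ∈ Finset.univ.filter (fun j : Fin T => (j : ℕ) < m), lam (Tuple.sort lam j)
      ≤ ∑ j, lam j * d j := by
  set σ := Tuple.sort lam with hσ
  have hmono : Monotone (lam ∘ σ) := Tuple.monotone_sort lam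
  have hswap : ∑ j, lam j * d j = ∑ j, lam (σ j) * d (σ j) :=
    (Equiv.sum_comp σ (fun j => lam j * d j)).symm
  set F := Finset.univ.filter (fun j : Fin T => (j : ℕ) < m) with hF
  have hcard : F.card = m := card_filter_lt hm
  have hsumσ : ∑ j, d (σ j) = (m : ℝ) := by
    rw [Equiv.sum_comp σ d]; exact hsum
  rcases eq_or_lt_of_le hm with h | h
  · have hall : ∀ j, d j = 1 := by
      intro j
      by_contra hne
      have hlt : d j < 1 := lt_of_le_of_ne (hd1 j) hne
      have : ∑ i, d i < ∑ i : Fin T, (1 : ℝ) := by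
        refine Finset.sum_lt_sum (fun i _ => hd1 i) ⟨j, Finset.mem_univ j, hlt⟩
      simp only [Finset.sum_const, Finset.card_univ, Fintype.card_fin, nsmul_eq_mul,
        mul_one] at this
      rw [hsum, ← h] at this
      exact lt_irrefl _ this
    subst h
    have hFuniv : F = Finset.univ := by
      rw [hF]; ext j; simpa using j.isLt
    rw [hFuniv, hswap]
    refine Finset.sum_le_sum fun j _ => by rw [hall (σ j), mul_one]
  · set τ := lam (σ ⟨m, h⟩) with hτ
    have key1 : ∀ j ∈ F, lam (σ j) ≤ lam (σ j) * d (σ j) + τ * (1 - d (σ j)) := by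
      intro j hj
      simp only [hF, Finset.mem_filter, Finset.mem_univ, true_and] at hj
      have hle : lam (σ j) ≤ τ := hmono (by exact le_of_lt hj : j ≤ (⟨m, h⟩ : Fin T))
      nlinarith [hd1 (σ j), hd0 (σ j)]
    have key2 : ∀ j ∈ Fᶜ, τ * d (σ j) ≤ lam (σ j) * d (σ j) := by
      intro j hj
      simp only [hF, Finset.compl_filter, Finset.mem_filter, Finset.mem_univ, true_and,
        not_lt] at hj
      have hle : τ ≤ lam (σ j) := hmono (by exact hj : (⟨m, h⟩ : Fin T) ≤ j)
      nlinarith [hd0 (σ j)]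
    have h1 : ∑ j ∈ F, lam (σ j)
        ≤ ∑ j ∈ F, lam (σ j) * d (σ j) + τ * ∑ j ∈ F, (1 - d (σ j)) := by
      rw [Finset.mul_sum, ← Finset.sum_add_distrib]
      exact Finset.sum_le_sum key1
    have h2 : τ * ∑ j ∈ F, (1 - d (σ j)) = τ * ∑ j ∈ Fᶜ, d (σ j) := by
      congr 1
      have he : ∑ j ∈ F, (1 - d (σ j)) = F.card - ∑ j ∈ F, d (σ j) := by
        rw [Finset.sum_sub_distrib]; simp
      rw [he, hcard]
      have hc := Finset.sum_add_sum_compl F (fun j => d (σ j))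
      rw [hsumσ] at hc
      linarith
    have h3 : τ * ∑ j ∈ Fᶜ, d (σ j) ≤ ∑ j ∈ Fᶜ, lam (σ j) * d (σ j) := by
      rw [Finset.mul_sum]; exact Finset.sum_le_sum key2
    have h4 : ∑ j ∈ F, lam (σ j) * d (σ j) + ∑ j ∈ Fᶜ, lam (σ j) * d (σ j)
        = ∑ j, lam (σ j) * d (σ j) := Finset.sum_add_sum_compl F _
    rw [hswap]
    linarith

lemma kyfan_up {T : ℕ} (lam d : Fin T → ℝ) (hlam : ∀ j, 0 ≤ lam j)
    (hd0 : ∀ j, 0 ≤ d j) (hd1 : ∀ j, d j ≤ 1) (m : ℕ)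
    (hzero : ∀ j : Fin T, m ≤ (j : ℕ) → d (Tuple.sort lam j) = 0) :
    ∑ j, lam j * d j
      ≤ ∑ j ∈ Finset.univ.filter (fun j : Fin T => (j : ℕ) < m), lam (Tuple.sort lam j) := by
  set σ := Tuple.sort lam with hσ
  set F := Finset.univ.filter (fun j : Fin T => (j : ℕ) < m) with hF
  have hswap : ∑ j, lam j * d j = ∑ j, lam (σ j) * d (σ j) :=
    (Equiv.sum_comp σ (fun j => lam j * d j)).symm
  rw [hswap, ← Finset.sum_add_sum_compl F (fun j => lam (σ j) * d (σ j))]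
  have hzero' : ∑ j ∈ Fᶜ, lam (σ j) * d (σ j) = 0 := by
    refine Finset.sum_eq_zero fun j hj => ?_
    simp only [hF, Finset.compl_filter, Finset.mem_filter, Finset.mem_univ, true_and,
      not_lt] at hj
    rw [hzero j hj, mul_zero]
  rw [hzero', add_zero]
  refine Finset.sum_le_sum fun j _ => ?_
  nlinarith [hlam (σ j), hd1 (σ j), hd0 (σ j)]

lemma onb_delta {ι : Type*} [Fintype ι] (b : OrthonormalBasis ι ℝ (EuclideanSpace ℝ (Fin T)))
    (s t : Fin T) :
    ∑ i, b i s * b i t = if t = s then (1 : ℝ) else 0 := by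
  have h := b.sum_inner_mul_inner (EuclideanSpace.single s (1 : ℝ))
    (EuclideanSpace.single t (1 : ℝ))
  simpa [EuclideanSpace.inner_single_left, EuclideanSpace.inner_single_right,
    EuclideanSpace.single_apply] using h

lemma trace_onb {ι : Type*} [Fintype ι] (b : OrthonormalBasis ι ℝ (EuclideanSpace ℝ (Fin T)))
    (M : Matrix (Fin T) (Fin T) ℝ) :
    ∑ i, ⟪b i, toE (M *ᵥ b i)⟫ = M.trace := by
  have h1 : ∀ i : ι, ⟪b i, toE (M *ᵥ b i)⟫ = ∑ s, ∑ t, M s t * (b i s * b i t) := by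
    intro i
    simp only [toE, PiLp.inner_apply, RCLike.inner_apply, starRingEnd_apply, star_trivial,
      mulVec, dotProduct, Finset.mul_sum]
    exact Finset.sum_congr rfl fun s _ => by
      rw [Finset.sum_mul]; exact Finset.sum_congr rfl fun t _ => by ring
  rw [Finset.sum_congr rfl fun i _ => h1 i, Finset.sum_comm]
  have h2 : ∀ s : Fin T, ∑ i, ∑ t, M s t * (b i s * b i t) = M s s := by
    intro s
    rw [Finset.sum_comm]
    have h3 : ∀ t, ∑ i, M s t * (b i s * b i t) = M s t * if t = s then 1 else 0 := by
      intro t; rw [← Finset.mul_sum, onb_delta]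
    simp [h3]
  simp [h2, Matrix.trace, Matrix.diag]

lemma inner_dot (x y : EuclideanSpace ℝ (Fin T)) : ⟪x, y⟫ = x ⬝ᵥ y := by
  simp [PiLp.inner_apply, RCLike.inner_apply, dotProduct]
  exact Finset.sum_congr rfl fun _ _ => mul_comm _ _

lemma inner_mulVec_dot (X Y : Matrix (Fin N) (Fin T) ℝ) (x : EuclideanSpace ℝ (Fin T)) :
    ⟪x, toE ((Xᵀ * Y) *ᵥ x)⟫ = (X *ᵥ x) ⬝ᵥ (Y *ᵥ x) := by
  rw [inner_dot]
  show x ⬝ᵥ ((Xᵀ * Y) *ᵥ x) = _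
  rw [← Matrix.mulVec_mulVec, Matrix.dotProduct_mulVec, Matrix.vecMul_transpose]

lemma mulVec_norm_le (X : Matrix (Fin N) (Fin T) ℝ) (x : EuclideanSpace ℝ (Fin T)) :
    ‖toE (X *ᵥ x)‖ ≤ opNorm X * ‖x‖ :=
  (LinearMap.toContinuousLinearMap (Matrix.toEuclideanLin X)).le_opNorm x

lemma dot_self_eq_normsq (y : EuclideanSpace ℝ (Fin N)) : y ⬝ᵥ y = ‖y‖ ^ 2 := by
  rw [← inner_dot, real_inner_self_eq_norm_sq]

lemma quad_expand {T : ℕ} (S : Matrix (Fin T) (Fin T) ℝ) (hS : S.IsHermitian)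
    (x : EuclideanSpace ℝ (Fin T)) :
    ⟪x, toE (S *ᵥ x)⟫ = ∑ j, hS.eigenvalues j * ⟪hS.eigenvectorBasis j, x⟫ ^ 2 := by
  have h := (hS.eigenvectorBasis).sum_inner_mul_inner x (toE (S *ᵥ x))
  rw [← h]
  refine Finset.sum_congr rfl fun j _ => ?_
  have hST : Sᵀ = S := by
    have := hS.eq
    rwa [Matrix.conjTranspose_eq_transpose_of_trivial] at this
  have hsym : ⟪hS.eigenvectorBasis j, toE (S *ᵥ x)⟫
      = ⟪toE (S *ᵥ hS.eigenvectorBasis j), x⟫ := by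
    rw [inner_dot, inner_dot]
    show (hS.eigenvectorBasis j : Fin T → ℝ) ⬝ᵥ (S *ᵥ x) = (S *ᵥ hS.eigenvectorBasis j) ⬝ᵥ x
    rw [Matrix.dotProduct_mulVec, ← Matrix.mulVec_transpose, hST]
  have hmv : S *ᵥ (hS.eigenvectorBasis j : Fin T → ℝ)
      = hS.eigenvalues j • (hS.eigenvectorBasis j : Fin T → ℝ) := hS.mulVec_eigenvectorBasis j
  rw [hsym, hmv]
  have hsc : ⟪toE (hS.eigenvalues j • (hS.eigenvectorBasis j : Fin T → ℝ)), x⟫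
      = hS.eigenvalues j * ⟪hS.eigenvectorBasis j, x⟫ := by
    rw [inner_dot, inner_dot]
    show (hS.eigenvalues j • (hS.eigenvectorBasis j : Fin T → ℝ)) ⬝ᵥ x = _
    rw [smul_dotProduct]
    rfl
  rw [hsc, real_inner_comm x (hS.eigenvectorBasis j)]
  ring

lemma exists_sum_onb {E : Type*} [NormedAddCommGroup E] [InnerProductSpace ℝ E]
    [FiniteDimensional ℝ E] (V : Submodule ℝ E) :
    ∃ b : OrthonormalBasis (Fin (Module.finrank ℝ V) ⊕ Fin (Module.finrank ℝ Vᗮ)) ℝ E,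
      (∀ i, b (Sum.inl i) = (stdOrthonormalBasis ℝ V i : E)) ∧
      (∀ i, b (Sum.inr i) = (stdOrthonormalBasis ℝ Vᗮ i : E)) := by
  set uu : Fin (Module.finrank ℝ V) → E := fun i => (stdOrthonormalBasis ℝ V i : E) with huu
  set cc : Fin (Module.finrank ℝ Vᗮ) → E := fun i => (stdOrthonormalBasis ℝ Vᗮ i : E) with hcc
  have huuV : ∀ i, uu i ∈ V := fun i => SetLike.coe_mem _
  have hccV : ∀ i, cc i ∈ Vᗮ := fun i => SetLike.coe_mem _
  have huon : Orthonormal ℝ uu :=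
    (stdOrthonormalBasis ℝ V).orthonormal.comp_linearIsometry V.subtypeₗᵢ
  have hcon : Orthonormal ℝ cc :=
    (stdOrthonormalBasis ℝ Vᗮ).orthonormal.comp_linearIsometry Vᗮ.subtypeₗᵢ
  have hcross : ∀ i j, ⟪uu i, cc j⟫ = 0 := fun i j =>
    (Submodule.mem_orthogonal V (cc j)).mp (hccV j) (uu i) (huuV i)
  have hon : Orthonormal ℝ (Sum.elim uu cc) := by
    constructor
    · rintro (i | i)
      · exact huon.1 i
      · exact hcon.1 i
    · rintro (i | i) (j | j) hij <;> simp only [Sum.elim_inl, Sum.elim_inr]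
      · exact huon.2 (fun h => hij (by rw [h]))
      · exact hcross i j
      · rw [real_inner_comm]; exact hcross j i
      · exact hcon.2 (fun h => hij (by rw [h]))
  have hspanu : span ℝ (Set.range uu) = V := by
    have h1 : Set.range uu = V.subtype '' Set.range (stdOrthonormalBasis ℝ V) := by
      rw [← Set.range_comp]; rfl
    rw [h1, ← Submodule.map_span, ← OrthonormalBasis.coe_toBasis, Module.Basis.span_eq]
    exact Submodule.map_subtype_top V
  have hspanc : span ℝ (Set.range cc) = Vᗮ := by
    have h1 : Set.range cc = Vᗮ.subtype '' Set.range (stdOrthonormalBasis ℝ Vᗮ) := by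
      rw [← Set.range_comp]; rfl
    rw [h1, ← Submodule.map_span, ← OrthonormalBasis.coe_toBasis, Module.Basis.span_eq]
    exact Submodule.map_subtype_top Vᗮ
  have hspan : ⊤ ≤ span ℝ (Set.range (Sum.elim uu cc)) := by
    rw [Set.Sum.elim_range, Submodule.span_union, hspanu, hspanc,
      Submodule.sup_orthogonal_of_hasOrthogonalProjection]
  refine ⟨OrthonormalBasis.mk hon hspan, fun i => ?_, fun i => ?_⟩ <;>
    rw [OrthonormalBasis.coe_mk] <;> rfl

/-- For N×T matrices W, e, L with rank(L) ≤ R⁰ and R + R⁰ ≤ T: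
Σ_{r=R+1}^{T} μ_r[(W+e+L)'(W+e+L)] ≥ Σ_{r=R+R⁰+1}^{T} μ_r(W'W) + Tr(ee')
− 2(R+R⁰)‖e‖² + 2Tr(We') − 2(R+R⁰)‖e‖·‖W‖. -/
theorem statement5 {N T : ℕ} (W e L : Matrix (Fin N) (Fin T) ℝ)
    (R R0 : ℕ) (hL : L.rank ≤ R0) (hRT : R + R0 ≤ T) :
    ∑ r ∈ Finset.Icc (R + 1) T, mu ((W + e + L)ᵀ * (W + e + L)) r ≥
      ∑ r ∈ Finset.Icc (R + R0 + 1) T, mu (Wᵀ * W) r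
        + Matrix.trace (e * eᵀ)
        - 2 * (R + R0 : ℝ) * opNorm e ^ 2
        + 2 * Matrix.trace (W * eᵀ)
        - 2 * (R + R0 : ℝ) * opNorm e * opNorm W := by
  classical
  rw [ge_iff_le]
  set A := W + e + L with hA
  have hRT' : R ≤ T := le_trans (Nat.le_add_right R R0) hRT
  have hS : (Aᵀ * A).IsHermitian := Matrix.isHermitian_conjTranspose_mul_self A
  have hW : (Wᵀ * W).IsHermitian := Matrix.isHermitian_conjTranspose_mul_self W
  set lam := hS.eigenvalues with hlam_def
  set v := hS.eigenvectorBasis with hv_def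
  set mum := hW.eigenvalues with hmum_def
  set w := hW.eigenvectorBasis with hw_def
  set σ := Tuple.sort lam with hσ_def
  have hlam0 : ∀ j, 0 ≤ lam j := by
    intro j
    have hpsd : (Aᴴ * A).PosSemidef := Matrix.posSemidef_conjTranspose_mul_self A
    rw [Matrix.conjTranspose_eq_transpose_of_trivial] at hpsd
    exact hpsd.eigenvalues_nonneg j
  have hmum0 : ∀ j, 0 ≤ mum j := by
    intro j
    have hpsd : (Wᴴ * W).PosSemidef := Matrix.posSemidef_conjTranspose_mul_self W
    rw [Matrix.conjTranspose_eq_transpose_of_trivial] at hpsd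
    exact hpsd.eigenvalues_nonneg j
  -- the subspace V
  set g : Fin R → EuclideanSpace ℝ (Fin T) :=
    fun k => v (σ ⟨T - R + (k : ℕ), by omega⟩) with hg_def
  set Vtop := Submodule.span ℝ (Set.range g) with hVtop_def
  set VL := Submodule.span ℝ (Set.range fun i : Fin N => toE (L i)) with hVL_def
  set V := Vtop ⊔ VL with hV_def
  have hVtopR : Module.finrank ℝ Vtop ≤ R := by
    refine le_trans (finrank_span_le_card (Set.range g)) ?_
    rw [Set.toFinset_range]
    exact le_trans Finset.card_image_le (by simp)
  have hVLR : Module.finrank ℝ VL ≤ R0 := by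
    have h1 : (Lᵀ).rank = Module.finrank ℝ (Submodule.span ℝ (Set.range L)) := by
      have h := Matrix.rank_eq_finrank_span_cols Lᵀ
      exact h
    have h2 : (Lᵀ).rank = L.rank := Matrix.rank_transpose L
    have h3 : VL = Submodule.map ((WithLp.linearEquiv 2 ℝ (Fin T → ℝ)).symm.toLinearMap)
        (Submodule.span ℝ (Set.range L)) := by
      rw [Submodule.map_span]
      exact congrArg (Submodule.span ℝ) (Set.range_comp _ L)
    have h4 : Module.finrank ℝ VL = Module.finrank ℝ (Submodule.span ℝ (Set.range L)) := by
      rw [h3]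
      exact LinearEquiv.finrank_map_eq (WithLp.linearEquiv 2 ℝ (Fin T → ℝ)).symm _
    rw [h4, ← h1, h2]
    exact hL
  have hpRR0 : Module.finrank ℝ V ≤ R + R0 := by
    have h := Submodule.finrank_sup_add_finrank_inf_eq Vtop VL
    rw [hV_def]
    omega
  set p := Module.finrank ℝ V with hp_def
  set q := Module.finrank ℝ Vᗮ with hq_def
  have hpq : p + q = T := by
    have h := Submodule.finrank_add_finrank_orthogonal V
    rw [finrank_euclideanSpace_fin] at h
    omega
  have hqT : q ≤ T := by omega
  have hqlow : T - (R + R0) ≤ q := by omega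
  obtain ⟨b, hbl, hbr⟩ := exists_sum_onb V
  set uu : Fin p → EuclideanSpace ℝ (Fin T) := fun i => b (Sum.inl i) with huu_def
  set cc : Fin q → EuclideanSpace ℝ (Fin T) := fun i => b (Sum.inr i) with hcc_def
  have hopWnn : 0 ≤ opNorm W := norm_nonneg _
  have hopEnn : 0 ≤ opNorm e := norm_nonneg _
  have hccV : ∀ i, cc i ∈ Vᗮ := by
    intro i
    rw [show cc i = b (Sum.inr i) from rfl, hbr i]
    exact SetLike.coe_mem _
  have hcc_on : Orthonormal ℝ cc := b.orthonormal.comp Sum.inr Sum.inr_injective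
  have hcc_norm : ∀ i, ‖cc i‖ = 1 := hcc_on.1
  have huu_norm : ∀ i, ‖uu i‖ = 1 := fun i => b.orthonormal.1 (Sum.inl i)
  have hgV : ∀ k : Fin R, g k ∈ V :=
    fun k => (le_sup_left : Vtop ≤ V) (Submodule.subset_span (Set.mem_range_self k))
  have hrowV : ∀ i : Fin N, toE (L i) ∈ V :=
    fun i => (le_sup_right : VL ≤ V) (Submodule.subset_span (Set.mem_range_self i))
  have hLcc : ∀ i, L *ᵥ (cc i : Fin T → ℝ) = 0 := by
    intro i
    funext s
    have h0 : ⟪toE (L s), cc i⟫ = 0 :=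
      (Submodule.mem_orthogonal V (cc i)).mp (hccV i) _ (hrowV s)
    rw [inner_dot] at h0
    exact h0
  -- the weights d
  set d : Fin T → ℝ := fun j => ∑ i, ⟪v j, cc i⟫ ^ 2 with hd_def
  have hd0 : ∀ j, 0 ≤ d j := fun j => Finset.sum_nonneg fun i _ => sq_nonneg _
  have hbessel : ∀ (x : EuclideanSpace ℝ (Fin T)), ‖x‖ = 1 →
      ∀ (m : ℕ) (z : Fin m → EuclideanSpace ℝ (Fin T)), Orthonormal ℝ z →
      ∑ i, ⟪x, z i⟫ ^ 2 ≤ 1 := by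
    intro x hx m z hz
    have h := hz.sum_inner_products_le (s := Finset.univ) x
    rw [hx] at h
    have h' : ∀ i, ⟪x, z i⟫ ^ 2 = ‖⟪z i, x⟫‖ ^ 2 := fun i => by
      rw [real_inner_comm, Real.norm_eq_abs, sq_abs]
    rw [one_pow] at h
    exact le_trans (le_of_eq (Finset.sum_congr rfl fun i _ => h' i)) h
  have hd1 : ∀ j, d j ≤ 1 := by
    intro j
    exact hbessel (v j) (v.orthonormal.1 j) q cc hcc_on
  have hdzero : ∀ j : Fin T, T - R ≤ (j : ℕ) → d (σ j) = 0 := by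
    intro j hj
    refine Finset.sum_eq_zero fun i _ => ?_
    have hmem : v (σ j) ∈ V := by
      have harg : (⟨T - R + ((j : ℕ) - (T - R)), by omega⟩ : Fin T) = j := by
        ext
        show T - R + ((j : ℕ) - (T - R)) = (j : ℕ)
        omega
      have hk : g ⟨(j : ℕ) - (T - R), by omega⟩ = v (σ j) := by
        calc g ⟨(j : ℕ) - (T - R), by omega⟩
            = v (σ ⟨T - R + ((j : ℕ) - (T - R)), by omega⟩) := rfl
          _ = v (σ j) := by rw [harg]
      exact hk ▸ hgV _
    have h0 : ⟪v (σ j), cc i⟫ = 0 :=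
      (Submodule.mem_orthogonal V (cc i)).mp (hccV i) _ hmem
    simp [h0]
  -- rewrite both mu-sums
  rw [sum_mu_eq (Aᵀ * A) hS R hRT', sum_mu_eq (Wᵀ * W) hW (R + R0) hRT,
    ← hlam_def, ← hmum_def, ← hσ_def]
  -- Ky Fan upper bound for the big matrix
  have key2 : (∑ j, lam j * d j)
      ≤ ∑ j ∈ Finset.univ.filter (fun j : Fin T => (j : ℕ) < T - R), lam (σ j) :=
    kyfan_up lam d hlam0 hd0 hd1 (T - R) hdzero
  -- expansion of the weighted sum
  have key3 : ∑ j, lam j * d j = ∑ i, (A *ᵥ (cc i : Fin T → ℝ)) ⬝ᵥ (A *ᵥ cc i) := by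
    calc ∑ j, lam j * d j = ∑ j, ∑ i, lam j * ⟪v j, cc i⟫ ^ 2 := by
          refine Finset.sum_congr rfl fun j _ => ?_
          simp only [hd_def]
          rw [Finset.mul_sum]
      _ = ∑ i, ∑ j, lam j * ⟪v j, cc i⟫ ^ 2 := Finset.sum_comm
      _ = ∑ i, ⟪cc i, toE ((Aᵀ * A) *ᵥ cc i)⟫ :=
          Finset.sum_congr rfl fun i _ => (quad_expand (Aᵀ * A) hS (cc i)).symm
      _ = ∑ i, (A *ᵥ (cc i : Fin T → ℝ)) ⬝ᵥ (A *ᵥ cc i) :=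
          Finset.sum_congr rfl fun i _ => inner_mulVec_dot A A (cc i)
  have hAcc : ∀ i, A *ᵥ (cc i : Fin T → ℝ) = W *ᵥ (cc i : Fin T → ℝ) + e *ᵥ cc i := by
    intro i
    rw [hA, Matrix.add_mulVec, Matrix.add_mulVec, hLcc i, add_zero]
  have key4 : ∑ i, (A *ᵥ (cc i : Fin T → ℝ)) ⬝ᵥ (A *ᵥ cc i)
      = (∑ i, (W *ᵥ (cc i : Fin T → ℝ)) ⬝ᵥ (W *ᵥ cc i))
        + (∑ i, (e *ᵥ (cc i : Fin T → ℝ)) ⬝ᵥ (e *ᵥ cc i))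
        + 2 * ∑ i, (W *ᵥ (cc i : Fin T → ℝ)) ⬝ᵥ (e *ᵥ cc i) := by
    rw [Finset.mul_sum, ← Finset.sum_add_distrib, ← Finset.sum_add_distrib]
    refine Finset.sum_congr rfl fun i _ => ?_
    rw [hAcc i, add_dotProduct, dotProduct_add, dotProduct_add,
      dotProduct_comm (e *ᵥ (cc i : Fin T → ℝ)) (W *ᵥ (cc i : Fin T → ℝ))]
    ring
  -- W term : Ky Fan lower bound
  set ρ := Tuple.sort mum with hρ_def
  have keyW : ∑ j ∈ Finset.univ.filter (fun j : Fin T => (j : ℕ) < T - (R + R0)), mum (ρ j)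
      ≤ ∑ i, (W *ᵥ (cc i : Fin T → ℝ)) ⬝ᵥ (W *ᵥ cc i) := by
    set d2 : Fin T → ℝ := fun j => ∑ i, ⟪w j, cc i⟫ ^ 2 with hd2_def
    have hd20 : ∀ j, 0 ≤ d2 j := fun j => Finset.sum_nonneg fun i _ => sq_nonneg _
    have hd21 : ∀ j, d2 j ≤ 1 := fun j => hbessel (w j) (w.orthonormal.1 j) q cc hcc_on
    have hparseval : ∀ x : EuclideanSpace ℝ (Fin T), ∑ j, ⟪w j, x⟫ ^ 2 = ‖x‖ ^ 2 := by
      intro x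
      have h := w.sum_inner_mul_inner x x
      rw [← real_inner_self_eq_norm_sq, ← h]
      refine Finset.sum_congr rfl fun j _ => ?_
      rw [real_inner_comm x (w j)]
      ring
    have hsum2 : ∑ j, d2 j = (q : ℝ) := by
      calc ∑ j, d2 j = ∑ j, ∑ i, ⟪w j, cc i⟫ ^ 2 := rfl
        _ = ∑ i, ∑ j, ⟪w j, cc i⟫ ^ 2 := Finset.sum_comm
        _ = ∑ i : Fin q, (1 : ℝ) := by
            refine Finset.sum_congr rfl fun i _ => ?_
            rw [hparseval (cc i), hcc_norm i]
            norm_num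
        _ = (q : ℝ) := by simp
    have hlow := kyfan_low mum d2 hd20 hd21 q hqT hsum2
    have heq : ∑ j, mum j * d2 j = ∑ i, (W *ᵥ (cc i : Fin T → ℝ)) ⬝ᵥ (W *ᵥ cc i) := by
      calc ∑ j, mum j * d2 j = ∑ j, ∑ i, mum j * ⟪w j, cc i⟫ ^ 2 := by
            refine Finset.sum_congr rfl fun j _ => ?_
            simp only [hd2_def]
            rw [Finset.mul_sum]
        _ = ∑ i, ∑ j, mum j * ⟪w j, cc i⟫ ^ 2 := Finset.sum_comm
        _ = ∑ i, ⟪cc i, toE ((Wᵀ * W) *ᵥ cc i)⟫ :=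
            Finset.sum_congr rfl fun i _ => (quad_expand (Wᵀ * W) hW (cc i)).symm
        _ = ∑ i, (W *ᵥ (cc i : Fin T → ℝ)) ⬝ᵥ (W *ᵥ cc i) :=
            Finset.sum_congr rfl fun i _ => inner_mulVec_dot W W (cc i)
    have hsubset : ∑ j ∈ Finset.univ.filter (fun j : Fin T => (j : ℕ) < T - (R + R0)),
        mum (ρ j) ≤ ∑ j ∈ Finset.univ.filter (fun j : Fin T => (j : ℕ) < q), mum (ρ j) := by
      refine Finset.sum_le_sum_of_subset_of_nonneg ?_ fun j _ _ => hmum0 _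
      intro x hx
      simp only [Finset.mem_filter, Finset.mem_univ, true_and] at hx ⊢
      omega
    calc ∑ j ∈ Finset.univ.filter (fun j : Fin T => (j : ℕ) < T - (R + R0)), mum (ρ j)
        ≤ ∑ j ∈ Finset.univ.filter (fun j : Fin T => (j : ℕ) < q), mum (ρ j) := hsubset
      _ ≤ ∑ j, mum j * d2 j := hlow
      _ = _ := heq
  -- trace identities via the full orthonormal basis
  have htr : ∀ M : Matrix (Fin T) (Fin T) ℝ,
      (∑ i : Fin p, ⟪uu i, toE (M *ᵥ uu i)⟫) + (∑ i : Fin q, ⟪cc i, toE (M *ᵥ cc i)⟫)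
        = M.trace := by
    intro M
    have h := trace_onb b M
    rw [Fintype.sum_sum_type] at h
    exact h
  -- e-term bound
  have he_term : Matrix.trace (e * eᵀ) - (R + R0 : ℝ) * opNorm e ^ 2
      ≤ ∑ i, (e *ᵥ (cc i : Fin T → ℝ)) ⬝ᵥ (e *ᵥ cc i) := by
    have h1 := htr (eᵀ * e)
    have h2 : ∑ i : Fin q, ⟪cc i, toE ((eᵀ * e) *ᵥ cc i)⟫
        = ∑ i, (e *ᵥ (cc i : Fin T → ℝ)) ⬝ᵥ (e *ᵥ cc i) :=
      Finset.sum_congr rfl fun i _ => inner_mulVec_dot e e (cc i)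
    have h3 : ∑ i : Fin p, ⟪uu i, toE ((eᵀ * e) *ᵥ uu i)⟫ ≤ (p : ℝ) * opNorm e ^ 2 := by
      have hb : ∀ i : Fin p, ⟪uu i, toE ((eᵀ * e) *ᵥ uu i)⟫ ≤ opNorm e ^ 2 := by
        intro i
        rw [inner_mulVec_dot e e (uu i)]
        have hn := mulVec_norm_le e (uu i)
        rw [huu_norm i, mul_one] at hn
        have hds : (e *ᵥ (uu i : Fin T → ℝ)) ⬝ᵥ (e *ᵥ uu i) = ‖toE (e *ᵥ uu i)‖ ^ 2 :=
          dot_self_eq_normsq (toE (e *ᵥ uu i))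
        rw [hds]
        exact pow_le_pow_left₀ (norm_nonneg _) hn 2
      calc ∑ i : Fin p, ⟪uu i, toE ((eᵀ * e) *ᵥ uu i)⟫ ≤ ∑ i : Fin p, opNorm e ^ 2 :=
            Finset.sum_le_sum fun i _ => hb i
        _ = (p : ℝ) * opNorm e ^ 2 := by simp [mul_comm]
    have h4 : (p : ℝ) * opNorm e ^ 2 ≤ (R + R0 : ℝ) * opNorm e ^ 2 := by
      have hcast : (p : ℝ) ≤ ((R + R0 : ℕ) : ℝ) := Nat.cast_le.mpr hpRR0
      have := mul_le_mul_of_nonneg_right hcast (sq_nonneg (opNorm e))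
      push_cast at this ⊢
      linarith
    have h5 : (eᵀ * e).trace = (e * eᵀ).trace := Matrix.trace_mul_comm eᵀ e
    linarith [h1, h2, h3, h4]
  -- cross-term bound
  have hcross_term : Matrix.trace (W * eᵀ) - (R + R0 : ℝ) * (opNorm e * opNorm W)
      ≤ ∑ i, (W *ᵥ (cc i : Fin T → ℝ)) ⬝ᵥ (e *ᵥ cc i) := by
    have h1 := htr (Wᵀ * e)
    have h2 : ∑ i : Fin q, ⟪cc i, toE ((Wᵀ * e) *ᵥ cc i)⟫
        = ∑ i, (W *ᵥ (cc i : Fin T → ℝ)) ⬝ᵥ (e *ᵥ cc i) :=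
      Finset.sum_congr rfl fun i _ => inner_mulVec_dot W e (cc i)
    have h3 : ∑ i : Fin p, ⟪uu i, toE ((Wᵀ * e) *ᵥ uu i)⟫
        ≤ (p : ℝ) * (opNorm e * opNorm W) := by
      have hb : ∀ i : Fin p, ⟪uu i, toE ((Wᵀ * e) *ᵥ uu i)⟫ ≤ opNorm e * opNorm W := by
        intro i
        rw [inner_mulVec_dot W e (uu i)]
        have hid : (W *ᵥ (uu i : Fin T → ℝ)) ⬝ᵥ (e *ᵥ uu i)
            = ⟪toE (W *ᵥ uu i), toE (e *ᵥ uu i)⟫ := (inner_dot (toE (W *ᵥ uu i)) (toE (e *ᵥ uu i))).symm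
        rw [hid]
        have hle := real_inner_le_norm (toE (W *ᵥ uu i)) (toE (e *ᵥ uu i))
        have hnW := mulVec_norm_le W (uu i)
        have hne := mulVec_norm_le e (uu i)
        rw [huu_norm i, mul_one] at hnW hne
        have hmul : ‖toE (W *ᵥ uu i)‖ * ‖toE (e *ᵥ uu i)‖ ≤ opNorm W * opNorm e :=
          mul_le_mul hnW hne (norm_nonneg _) hopWnn
        calc ⟪toE (W *ᵥ uu i), toE (e *ᵥ uu i)⟫ ≤ _ := hle
          _ ≤ opNorm W * opNorm e := hmul
          _ = opNorm e * opNorm W := mul_comm _ _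
      calc ∑ i : Fin p, ⟪uu i, toE ((Wᵀ * e) *ᵥ uu i)⟫
          ≤ ∑ i : Fin p, (opNorm e * opNorm W) := Finset.sum_le_sum fun i _ => hb i
        _ = (p : ℝ) * (opNorm e * opNorm W) := by simp [mul_comm]
    have h4 : (p : ℝ) * (opNorm e * opNorm W) ≤ (R + R0 : ℝ) * (opNorm e * opNorm W) := by
      have hcast : (p : ℝ) ≤ ((R + R0 : ℕ) : ℝ) := Nat.cast_le.mpr hpRR0
      have hon := mul_nonneg hopEnn hopWnn
      have := mul_le_mul_of_nonneg_right hcast hon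
      push_cast at this ⊢
      linarith
    have h5 : (Wᵀ * e).trace = (W * eᵀ).trace := by
      rw [Matrix.trace_mul_comm, ← Matrix.trace_transpose, Matrix.transpose_mul,
        Matrix.transpose_transpose]
    linarith [h1, h2, h3, h4]
  -- assemble
  have hopE : 0 ≤ opNorm e ^ 2 := sq_nonneg _
  have hRR0 : (0 : ℝ) ≤ (R + R0 : ℝ) := by positivity
  have hfinal : (0 : ℝ) ≤ (R + R0 : ℝ) * opNorm e ^ 2 := mul_nonneg hRR0 hopE
  linarith [key2, key3, key4, keyW, he_term, hcross_term]

end Auxiliary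
end

section
/- Let e and L be N×T matrices with rank(L) ≤ R and R ≤ T. Then Σ_{r=R+1}^{T} μ_r[(e + L)'(e + L)] ≤ Tr(e' e). -/
open Matrix MeasureTheory
open scoped BigOperators

namespace Stmt6Aux

lemma diag_transpose_mul_self_nonneg {m n : ℕ} (C : Matrix (Fin m) (Fin n) ℝ) (j : Fin n) :
    0 ≤ (Cᵀ * C) j j := by
  rw [Matrix.mul_apply]
  exact Finset.sum_nonneg fun i _ => by
    rw [Matrix.transpose_apply]; exact mul_self_nonneg _

lemma trace_transpose_mul_self_nonneg {m n : ℕ} (C : Matrix (Fin m) (Fin n) ℝ) :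
    0 ≤ Matrix.trace (Cᵀ * C) :=
  Finset.sum_nonneg fun j _ => diag_transpose_mul_self_nonneg C j

/-- Core Ky Fan-type inequality: if `g` is monotone nonnegative, `s` takes values in `[0,1]`
with total mass at least `k`, then the sum of the `k` smallest values of `g` is at most
`∑ g j * s j`. -/
lemma core {Tn k : ℕ} (hk : k ≤ Tn) (g s : Fin Tn → ℝ) (hg : Monotone g)
    (hg0 : ∀ j, 0 ≤ g j) (hs0 : ∀ j, 0 ≤ s j) (hs1 : ∀ j, s j ≤ 1)
    (hsum : (k : ℝ) ≤ ∑ j, s j) :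
    ∑ j : Fin Tn, (if (j : ℕ) < k then g j else 0) ≤ ∑ j : Fin Tn, g j * s j := by
  rcases Nat.eq_zero_or_pos k with hk0 | hk0
  · subst hk0
    simp only [Nat.not_lt_zero, if_false, Finset.sum_const_zero]
    exact Finset.sum_nonneg fun j _ => mul_nonneg (hg0 j) (hs0 j)
  · have hkT : k - 1 < Tn := by omega
    set c := g ⟨k - 1, hkT⟩ with hc
    have hc0 : 0 ≤ c := hg0 _
    have key : ∀ j : Fin Tn, (if (j : ℕ) < k then g j - c else 0) ≤ (g j - c) * s j := by
      intro j
      by_cases hj : (j : ℕ) < k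
      · rw [if_pos hj]
        have hgc : g j ≤ c := hg (by simp only [Fin.mk_le_mk, Fin.le_def]; omega)
        nlinarith [hs0 j, hs1 j]
      · rw [if_neg hj]
        have hgc : c ≤ g j := hg (by simp only [Fin.mk_le_mk, Fin.le_def]; omega)
        exact mul_nonneg (by linarith) (hs0 j)
    have h2 : ∑ j : Fin Tn, (if (j : ℕ) < k then g j - c else 0)
        ≤ ∑ j : Fin Tn, (g j - c) * s j :=
      Finset.sum_le_sum fun j _ => key j
    have hcount : ∑ j : Fin Tn, (if (j : ℕ) < k then c else (0 : ℝ)) = c * k := by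
      rw [Fin.sum_univ_eq_sum_range (fun j => if j < k then c else (0 : ℝ)) Tn]
      have hcong : ∀ j ∈ Finset.range Tn,
          (if j < k then c else (0 : ℝ)) = if j ∈ Finset.range k then c else 0 := by
        intro j _; simp [Finset.mem_range]
      rw [Finset.sum_congr rfl hcong, Finset.sum_ite_mem,
        Finset.inter_eq_right.mpr (Finset.range_subset_range.mpr hk), Finset.sum_const,
        Finset.card_range, nsmul_eq_mul]
      ring
    have hsplit : ∑ j : Fin Tn, (if (j : ℕ) < k then g j else 0)
        = (∑ j : Fin Tn, (if (j : ℕ) < k then g j - c else 0)) + c * k := by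
      rw [← hcount, ← Finset.sum_add_distrib]
      exact Finset.sum_congr rfl fun j _ => by split_ifs <;> ring
    have h3 : ∑ j : Fin Tn, (g j - c) * s j
        = (∑ j : Fin Tn, g j * s j) - c * ∑ j : Fin Tn, s j := by
      rw [Finset.mul_sum, ← Finset.sum_sub_distrib]
      exact Finset.sum_congr rfl fun j _ => by ring
    have h4 : c * (k : ℝ) ≤ c * ∑ j : Fin Tn, s j := mul_le_mul_of_nonneg_left hsum hc0
    rw [hsplit]
    rw [h3] at h2
    linarith

end Stmt6Aux

/-- For N×T matrices e, L with rank(L) ≤ R and R ≤ T: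
Σ_{r=R+1}^{T} μ_r[(e+L)'(e+L)] ≤ Tr(e'e). -/
theorem statement6 {N T : ℕ} (e L : Matrix (Fin N) (Fin T) ℝ)
    (R : ℕ) (hL : L.rank ≤ R) (hRT : R ≤ T) :
    ∑ r ∈ Finset.Icc (R + 1) T, mu ((e + L)ᵀ * (e + L)) r ≤
      Matrix.trace (eᵀ * e) := by
  classical
  set A := e + L with hAdef
  set S := Aᵀ * A with hSdef
  have hSpsd : S.PosSemidef := by
    have h := Matrix.posSemidef_conjTranspose_mul_self A
    rwa [Matrix.conjTranspose_eq_transpose_of_trivial] at h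
  have hS : S.IsHermitian := hSpsd.isHermitian
  set ν : Fin T → ℝ := hS.eigenvalues with hν
  set σp : Equiv.Perm (Fin T) := Tuple.sort ν with hσp
  set g : Fin T → ℝ := ν ∘ σp with hgdef
  have hgmono : Monotone g := Tuple.monotone_sort ν
  have hg0 : ∀ j, 0 ≤ g j := fun j => hSpsd.eigenvalues_nonneg (σp j)
  set k := T - R with hkdef
  -- Step 1: rewrite the LHS as the sum of the k smallest sorted eigenvalues
  have hLHS : ∑ r ∈ Finset.Icc (R + 1) T, mu S r
      = ∑ j : Fin T, (if (j : ℕ) < k then g j else 0) := by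
    rw [← Finset.sum_filter]
    refine Finset.sum_bij' (fun r hr => (⟨T - r, ?_⟩ : Fin T))
      (fun x hx => T - (x : ℕ)) ?_ ?_ ?_ ?_ ?_
    · rw [Finset.mem_Icc] at hr; omega
    · intro r hr
      rw [Finset.mem_Icc] at hr
      simp only [Finset.mem_filter, Finset.mem_univ, true_and]
      omega
    · intro x hx
      simp only [Finset.mem_filter, Finset.mem_univ, true_and] at hx
      simp only [Finset.mem_Icc]
      omega
    · intro r hr
      rw [Finset.mem_Icc] at hr
      simp only
      omega
    · intro x hx
      simp only [Finset.mem_filter, Finset.mem_univ, true_and] at hx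
      apply Fin.ext
      simp only
      omega
    · intro r hr
      rw [Finset.mem_Icc] at hr
      have hmem : S.IsHermitian ∧ 1 ≤ r ∧ r ≤ T := ⟨hS, by omega, by omega⟩
      unfold mu
      rw [dif_pos hmem]
      exact congrArg g (Fin.ext (by simp [Fin.val_rev]; omega))
  -- the kernel subspace of L and an orthonormal basis of it
  set Vk : Submodule ℝ (EuclideanSpace ℝ (Fin T)) :=
    (LinearMap.ker L.mulVecLin).map
      (WithLp.linearEquiv 2 ℝ (Fin T → ℝ)).symm.toLinearMap with hVk
  have hdk : k ≤ Module.finrank ℝ Vk := by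
    have h1 : Module.finrank ℝ Vk = Module.finrank ℝ (LinearMap.ker L.mulVecLin) := by
      rw [hVk]
      exact LinearEquiv.finrank_map_eq _ _
    have h2 := LinearMap.finrank_range_add_finrank_ker L.mulVecLin
    rw [Module.finrank_fin_fun] at h2
    have h3 : Module.finrank ℝ (LinearMap.range L.mulVecLin) ≤ R := hL
    omega
  set b := stdOrthonormalBasis ℝ Vk with hb
  set W : Matrix (Fin T) (Fin (Module.finrank ℝ Vk)) ℝ :=
    Matrix.of (fun x j => ((b j : Vk) : EuclideanSpace ℝ (Fin T)) x) with hWdef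
  have hWW : Wᵀ * W = 1 := by
    have hob := b.orthonormal
    rw [orthonormal_iff_ite] at hob
    ext j l
    have h1 := hob l j
    rw [Submodule.coe_inner, PiLp.inner_apply] at h1
    simp only [RCLike.inner_apply, starRingEnd_apply, star_trivial] at h1
    simpa [Matrix.mul_apply, Matrix.one_apply, hWdef, @eq_comm _ l j] using h1
  have hLW : L * W = 0 := by
    ext i j
    obtain ⟨v, hv, hev⟩ := (b j).2
    have hvW : ∀ x, W x j = v x := by
      intro x
      simp only [hWdef, Matrix.of_apply]
      rw [← hev]
      rfl
    have hmv : L.mulVec v = 0 := by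
      have := LinearMap.mem_ker.mp hv
      rwa [Matrix.mulVecLin_apply] at this
    rw [Matrix.mul_apply, Matrix.zero_apply]
    calc ∑ x, L i x * W x j = ∑ x, L i x * v x := by simp only [hvW]
    _ = L.mulVec v i := rfl
    _ = 0 := by rw [hmv]; rfl
  -- the projection matrix Q onto ker L
  set Q : Matrix (Fin T) (Fin T) ℝ := W * Wᵀ with hQdef
  have hQsym : Qᵀ = Q := by
    rw [hQdef, Matrix.transpose_mul, Matrix.transpose_transpose]
  have hQidem : Q * Q = Q := by
    rw [hQdef, Matrix.mul_assoc, ← Matrix.mul_assoc Wᵀ W Wᵀ, hWW, Matrix.one_mul]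
  have hMsym : (1 - Q)ᵀ = 1 - Q := by
    rw [Matrix.transpose_sub, Matrix.transpose_one, hQsym]
  have hMidem : (1 - Q) * (1 - Q) = 1 - Q := by
    rw [sub_mul, one_mul, mul_sub, mul_one, hQidem, sub_self, sub_zero]
  have htrQ : Matrix.trace Q = (Module.finrank ℝ Vk : ℝ) := by
    rw [hQdef, Matrix.trace_mul_comm, hWW, Matrix.trace_one]
    simp
  -- diagonalize S
  set U : Matrix (Fin T) (Fin T) ℝ := ↑(hS.eigenvectorUnitary) with hUdef
  have hUU : U * Uᵀ = 1 := by
    have h := (Matrix.mem_unitaryGroup_iff).mp hS.eigenvectorUnitary.2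
    rwa [Matrix.star_eq_conjTranspose, Matrix.conjTranspose_eq_transpose_of_trivial] at h
  have hUU' : Uᵀ * U = 1 := by
    have h := (Matrix.mem_unitaryGroup_iff').mp hS.eigenvectorUnitary.2
    rwa [Matrix.star_eq_conjTranspose, Matrix.conjTranspose_eq_transpose_of_trivial] at h
  have hSpec : S = U * Matrix.diagonal ν * Uᵀ := by
    have h := hS.spectral_theorem
    rwa [Unitary.conjStarAlgAut_apply, Matrix.star_eq_conjTranspose, Matrix.conjTranspose_eq_transpose_of_trivial,
      RCLike.ofReal_real_eq_id, Function.id_comp] at h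
  set t : Fin T → ℝ := fun j => (Uᵀ * Q * U) j j with htdef
  have hfact1 : Uᵀ * Q * U = (Wᵀ * U)ᵀ * (Wᵀ * U) := by
    rw [Matrix.transpose_mul, Matrix.transpose_transpose, hQdef]
    simp only [Matrix.mul_assoc]
  have ht0 : ∀ j, 0 ≤ t j := by
    intro j
    have h := Stmt6Aux.diag_transpose_mul_self_nonneg (Wᵀ * U) j
    rw [← hfact1] at h
    exact h
  have hfact2 : Uᵀ * (1 - Q) * U = ((1 - Q) * U)ᵀ * ((1 - Q) * U) := by
    calc Uᵀ * (1 - Q) * U = Uᵀ * ((1 - Q) * (1 - Q)) * U := by rw [hMidem]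
    _ = ((1 - Q) * U)ᵀ * ((1 - Q) * U) := by
        rw [Matrix.transpose_mul, hMsym]
        simp only [Matrix.mul_assoc]
  have ht1 : ∀ j, t j ≤ 1 := by
    intro j
    have h0 := Stmt6Aux.diag_transpose_mul_self_nonneg ((1 - Q) * U) j
    rw [← hfact2] at h0
    have hexp : (Uᵀ * (1 - Q) * U) j j = 1 - t j := by
      have h1 : Uᵀ * (1 - Q) * U = Uᵀ * U - Uᵀ * Q * U := by
        rw [mul_sub, mul_one, sub_mul]
      rw [h1, Matrix.sub_apply, hUU', Matrix.one_apply_eq]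
    rw [hexp] at h0
    linarith
  have htsum : (k : ℝ) ≤ ∑ j, t j := by
    have h1 : ∑ j, t j = Matrix.trace (Uᵀ * Q * U) := by
      simp [Matrix.trace, Matrix.diag, htdef]
    have h2 : Matrix.trace (Uᵀ * Q * U) = Matrix.trace Q := by
      rw [Matrix.trace_mul_cycle, hUU, Matrix.one_mul]
    rw [h1, h2, htrQ]
    exact_mod_cast hdk
  set s : Fin T → ℝ := fun j => t (σp j) with hsdef
  have hsum_s : ∑ j, s j = ∑ j, t j := Equiv.sum_comp σp t
  have hsum_gs : ∑ j : Fin T, g j * s j = ∑ j : Fin T, ν j * t j :=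
    Equiv.sum_comp σp (fun j => ν j * t j)
  have hAW : A * W = e * W := by
    rw [hAdef, Matrix.add_mul, hLW, add_zero]
  have hmain : ∑ j : Fin T, ν j * t j ≤ Matrix.trace (eᵀ * e) := by
    have hfinal : Matrix.trace (eᵀ * e * Q) ≤ Matrix.trace (eᵀ * e) := by
      have h0 := Stmt6Aux.trace_transpose_mul_self_nonneg (e * (1 - Q))
      have h1 : Matrix.trace ((e * (1 - Q))ᵀ * (e * (1 - Q)))
          = Matrix.trace (eᵀ * e) - Matrix.trace (eᵀ * e * Q) := by
        rw [Matrix.transpose_mul, hMsym]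
        have h2 : ((1 - Q) * eᵀ) * (e * (1 - Q)) = (1 - Q) * (eᵀ * e) * (1 - Q) := by
          simp only [Matrix.mul_assoc]
        rw [h2, Matrix.trace_mul_cycle (1 - Q) (eᵀ * e) (1 - Q), hMidem, sub_mul, one_mul,
          Matrix.trace_sub, Matrix.trace_mul_comm Q (eᵀ * e)]
      linarith
    calc ∑ j : Fin T, ν j * t j
        = Matrix.trace (Matrix.diagonal ν * (Uᵀ * Q * U)) := by
          simp [Matrix.trace, Matrix.diag, Matrix.diagonal_mul, htdef]
    _ = Matrix.trace ((Matrix.diagonal ν * Uᵀ * Q) * U) := by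
          congr 1
          simp only [Matrix.mul_assoc]
    _ = Matrix.trace (U * (Matrix.diagonal ν * Uᵀ * Q)) := Matrix.trace_mul_comm _ _
    _ = Matrix.trace (S * Q) := by
          rw [hSpec]
          congr 1
          simp only [Matrix.mul_assoc]
    _ = Matrix.trace ((A * W)ᵀ * (A * W)) := by
          rw [hSdef, hQdef]
          have h : Aᵀ * A * (W * Wᵀ) = (Aᵀ * A * W) * Wᵀ := by
            simp only [Matrix.mul_assoc]
          rw [h, Matrix.trace_mul_comm, Matrix.transpose_mul]
          congr 1
          simp only [Matrix.mul_assoc]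
    _ = Matrix.trace ((e * W)ᵀ * (e * W)) := by rw [hAW]
    _ = Matrix.trace (eᵀ * e * Q) := by
          rw [Matrix.transpose_mul, hQdef]
          have h2 : eᵀ * e * (W * Wᵀ) = (eᵀ * e * W) * Wᵀ := by
            simp only [Matrix.mul_assoc]
          conv_rhs => rw [h2, Matrix.trace_mul_comm]
          congr 1
          simp only [Matrix.mul_assoc]
    _ ≤ Matrix.trace (eᵀ * e) := hfinal
  calc ∑ r ∈ Finset.Icc (R + 1) T, mu S r
      = ∑ j : Fin T, (if (j : ℕ) < k then g j else 0) := hLHS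
  _ ≤ ∑ j : Fin T, g j * s j :=
      Stmt6Aux.core (by omega) g s hgmono hg0 (fun j => ht0 _) (fun j => ht1 _)
        (by rw [hsum_s]; exact htsum)
  _ = ∑ j : Fin T, ν j * t j := hsum_gs
  _ ≤ Matrix.trace (eᵀ * e) := hmain
end

section
/- Let A and B be symmetric n×n matrices with A positive semi-definite. Let μ_1(A) ≥ μ_2(A) ≥ … ≥ μ_n(A) ≥ 0 be the eigenvalues of A with corresponding orthonormal eigenvectors ν_1,…,ν_n, and set b = max_{i,j=1,…,n} |ν_i' B ν_j|. Let r and q be positive integers with r < q ≤ n, suppose μ_r(A) > μ_i(A) for all i ≥ q, and suppose Σ_{i=q}^{n} b/(μ_r(A) − μ_i(A)) < 1. Then |μ_r(A+B) − μ_r(A)| ≤ (q−1)·b / (1 − Σ_{i=q}^{n} b/(μ_r(A) − μ_i(A))). -/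
open Matrix MeasureTheory
open scoped BigOperators

lemma mu_eq {n : ℕ} {S : Matrix (Fin n) (Fin n) ℝ} (hS : S.IsHermitian) {r : ℕ}
    (h1 : 1 ≤ r) (h2 : r ≤ n) :
    mu S r = hS.eigenvalues (Tuple.sort hS.eigenvalues ⟨n - r, by omega⟩) := by
  rw [mu, dif_pos ⟨hS, h1, h2⟩]
  have heq : Fin.rev (⟨r - 1, by omega⟩ : Fin n) = (⟨n - r, by omega⟩ : Fin n) := by
    ext
    rw [Fin.val_rev]
    simp only []
    omega
  show hS.eigenvalues (Tuple.sort hS.eigenvalues (Fin.rev ⟨r - 1, by omega⟩)) = _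
  rw [heq]

lemma mu_antitone {n : ℕ} {S : Matrix (Fin n) (Fin n) ℝ} (hS : S.IsHermitian) {a a' : ℕ}
    (h1 : 1 ≤ a) (haa' : a ≤ a') (h2 : a' ≤ n) : mu S a' ≤ mu S a := by
  rw [mu_eq hS (h1.trans haa') h2, mu_eq hS h1 (haa'.trans h2)]
  exact Tuple.monotone_sort hS.eigenvalues (show (⟨n - a', by omega⟩ : Fin n) ≤ ⟨n - a, by omega⟩ by
    simp only [Fin.mk_le_mk]; omega)

lemma card_filter_interval {n : ℕ} (a c : ℕ) (hc : c ≤ n) :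
    (Finset.univ.filter (fun k : Fin n => a ≤ k.val ∧ k.val < c)).card = c - a := by
  rw [← Nat.card_Ico a c]
  exact Finset.card_bij' (fun (k : Fin n) _ => k.val)
    (fun j hj => (⟨j, by simp only [Finset.mem_Ico] at hj; omega⟩ : Fin n))
    (fun k hk => by simp only [Finset.mem_filter] at hk; simp only [Finset.mem_Ico]; omega)
    (fun j hj => by simp only [Finset.mem_Ico] at hj
                    simp only [Finset.mem_filter]
                    exact ⟨Finset.mem_univ _, by omega⟩)
    (fun k hk => rfl) (fun j hj => rfl)

/-- Test-vector construction lemma. -/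
lemma aux_test {n : ℕ} (S : Matrix (Fin n) (Fin n) ℝ) (w : Fin n → Fin n → ℝ)
    (g : Fin n → ℝ) (K : Finset (Fin n))
    (hw : ∀ k ∈ K, ∀ l ∈ K, w k ⬝ᵥ w l = if k = l then (1:ℝ) else 0)
    (heg : ∀ k ∈ K, S *ᵥ w k = g k • w k)
    (νf : Fin n → Fin n → ℝ) (J : Finset (Fin n)) (hcard : J.card < K.card)
    (lo : ℝ) (hlo : ∀ k ∈ K, lo ≤ g k) :
    ∃ u : Fin n → ℝ, 0 < u ⬝ᵥ u ∧ (∀ j ∈ J, νf j ⬝ᵥ u = 0) ∧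
      lo * (u ⬝ᵥ u) ≤ u ⬝ᵥ (S *ᵥ u) := by
  classical
  -- dot product helpers
  have dot_sum_right : ∀ (v : Fin n → ℝ) (t : Finset {x // x ∈ K}) (f : {x // x ∈ K} → Fin n → ℝ),
      v ⬝ᵥ (∑ k ∈ t, f k) = ∑ k ∈ t, v ⬝ᵥ f k := by
    intro v t f
    simp only [dotProduct, Finset.sum_apply, Finset.mul_sum]
    rw [Finset.sum_comm]
  have dot_sum_left : ∀ (v : Fin n → ℝ) (t : Finset {x // x ∈ K}) (f : {x // x ∈ K} → Fin n → ℝ),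
      (∑ k ∈ t, f k) ⬝ᵥ v = ∑ k ∈ t, f k ⬝ᵥ v := by
    intro v t f
    simp only [dotProduct, Finset.sum_apply, Finset.sum_mul]
    rw [Finset.sum_comm]
  -- the constraint matrix
  set M : Matrix {x // x ∈ J} {x // x ∈ K} ℝ := Matrix.of (fun j k => νf ↑j ⬝ᵥ w ↑k) with hM
  have hni : ¬ Function.Injective M.mulVecLin := by
    intro h
    have h1 := LinearMap.finrank_le_finrank_of_injective h
    rw [Module.finrank_fintype_fun_eq_card, Module.finrank_fintype_fun_eq_card,
      Fintype.card_coe, Fintype.card_coe] at h1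
    omega
  rw [← LinearMap.ker_eq_bot] at hni
  obtain ⟨c, hcker, hc0⟩ := (Submodule.ne_bot_iff _).1 hni
  rw [LinearMap.mem_ker] at hcker
  -- the test vector
  set u : Fin n → ℝ := ∑ k ∈ K.attach, c k • w ↑k with hu
  have hudotw : ∀ l : {x // x ∈ K}, u ⬝ᵥ w ↑l = c l := by
    intro l
    rw [hu, dot_sum_left]
    have : ∀ k ∈ K.attach, (c k • w ↑k) ⬝ᵥ w ↑l = if k = l then c k else 0 := by
      intro k _
      rw [smul_dotProduct, hw ↑k k.2 ↑l l.2, smul_eq_mul]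
      by_cases h : k = l
      · simp [h]
      · have : (↑k : Fin n) ≠ ↑l := fun hh => h (Subtype.ext hh)
        simp [h, this]
    rw [Finset.sum_congr rfl this, Finset.sum_ite_eq' K.attach l, if_pos (Finset.mem_attach _ _)]
  have huu : u ⬝ᵥ u = ∑ k ∈ K.attach, (c k) ^ 2 := by
    calc u ⬝ᵥ u = ∑ k ∈ K.attach, u ⬝ᵥ (c k • w ↑k) := dot_sum_right u K.attach _
      _ = ∑ k ∈ K.attach, (c k) ^ 2 := Finset.sum_congr rfl fun k _ => by
            rw [dotProduct_smul, smul_eq_mul, hudotw k, sq]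
  have huupos : 0 < u ⬝ᵥ u := by
    rw [huu]
    obtain ⟨k0, hk0⟩ : ∃ k0, c k0 ≠ 0 := by
      by_contra h
      push_neg at h
      exact hc0 (funext fun k => h k)
    have : (0:ℝ) < c k0 ^ 2 := by positivity
    exact Finset.sum_pos' (fun k _ => sq_nonneg _) ⟨k0, Finset.mem_attach _ _, this⟩
  have hSu : S *ᵥ u = ∑ k ∈ K.attach, c k • (g ↑k • w ↑k) := by
    rw [hu, ← Matrix.mulVecLin_apply, map_sum]
    refine Finset.sum_congr rfl fun k _ => ?_
    rw [LinearMap.map_smul, Matrix.mulVecLin_apply, heg ↑k k.2]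
  have huSu : u ⬝ᵥ (S *ᵥ u) = ∑ k ∈ K.attach, g ↑k * (c k) ^ 2 := by
    rw [hSu, dot_sum_right]
    refine Finset.sum_congr rfl fun k _ => ?_
    rw [dotProduct_smul, dotProduct_smul, smul_eq_mul, smul_eq_mul,
      hudotw k, sq]
    ring
  refine ⟨u, huupos, ?_, ?_⟩
  · intro j hj
    have := congrFun hcker ⟨j, hj⟩
    rw [Matrix.mulVecLin_apply] at this
    rw [hu, dot_sum_right]
    simp only [dotProduct_smul, smul_eq_mul]
    calc ∑ k ∈ K.attach, c k * (νf j ⬝ᵥ w ↑k)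
        = ∑ k ∈ K.attach, M ⟨j, hj⟩ k * c k :=
          Finset.sum_congr rfl fun k _ => mul_comm _ _
      _ = M.mulVec c ⟨j, hj⟩ := by rw [Matrix.mulVec, dotProduct, Finset.univ_eq_attach]
      _ = 0 := this
  · rw [huSu, huu, Finset.mul_sum]
    exact Finset.sum_le_sum fun k _ => mul_le_mul_of_nonneg_right (hlo ↑k k.2) (sq_nonneg _)

open scoped RealInnerProductSpace in
lemma parseval_dot {n : ℕ} (hn : 0 < n) (νf : Fin n → Fin n → ℝ)
    (hortho : ∀ i j : Fin n, νf i ⬝ᵥ νf j = if i = j then (1:ℝ) else 0)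
    (u v : Fin n → ℝ) : u ⬝ᵥ v = ∑ i, (νf i ⬝ᵥ u) * (νf i ⬝ᵥ v) := by
  haveI : Nonempty (Fin n) := Fin.pos_iff_nonempty.mp hn
  set toE : (Fin n → ℝ) → EuclideanSpace ℝ (Fin n) :=
    fun x => (WithLp.equiv 2 (Fin n → ℝ)).symm x with htoE'
  have htoE : ∀ x y : Fin n → ℝ, ⟪toE x, toE y⟫ = x ⬝ᵥ y := by
    intro x y
    simp [PiLp.inner_apply, RCLike.inner_apply, dotProduct, htoE']
    exact Finset.sum_congr rfl fun i _ => mul_comm _ _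
  have horthoE : Orthonormal ℝ (fun i => toE (νf i)) := by
    rw [orthonormal_iff_ite]
    intro i j
    rw [htoE, hortho]
  have hcard : Fintype.card (Fin n) = Module.finrank ℝ (EuclideanSpace ℝ (Fin n)) := by
    rw [finrank_euclideanSpace_fin, Fintype.card_fin]
  set bas := basisOfOrthonormalOfCardEqFinrank horthoE hcard with hbas'
  have hbco : ⇑bas = fun i => toE (νf i) := coe_basisOfOrthonormalOfCardEqFinrank _ _
  set onb := bas.toOrthonormalBasis (by rw [hbco]; exact horthoE) with honb'
  have honb : ∀ i, onb i = toE (νf i) := by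
    intro i
    rw [honb', Module.Basis.coe_toOrthonormalBasis, hbco]
  have key := onb.sum_inner_mul_inner (toE u) (toE v)
  calc u ⬝ᵥ v = ⟪toE u, toE v⟫ := (htoE u v).symm
    _ = ∑ i, ⟪toE u, onb i⟫ * ⟪onb i, toE v⟫ := key.symm
    _ = ∑ i, (νf i ⬝ᵥ u) * (νf i ⬝ᵥ v) := by
        refine Finset.sum_congr rfl fun i _ => ?_
        rw [honb i, htoE, htoE, dotProduct_comm u (νf i)]

set_option maxHeartbeats 4000000 in
/-- eigenvalue perturbation bound. Let A, B be symmetric n×n matrices,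
A positive semi-definite, with orthonormal eigenvectors ν_1,…,ν_n of A (for the decreasingly
ordered eigenvalues), b = max_{i,j} |ν_i' B ν_j|, 1 ≤ r < q ≤ n, μ_r(A) > μ_i(A) for i ≥ q,
and Σ_{i=q}^{n} b/(μ_r(A) − μ_i(A)) < 1. Then
|μ_r(A+B) − μ_r(A)| ≤ (q−1)b / (1 − Σ_{i=q}^{n} b/(μ_r(A) − μ_i(A))). -/
theorem statement8 {n : ℕ} (A B : Matrix (Fin n) (Fin n) ℝ)
    (hA : A.PosSemidef) (hB : B.IsHermitian)
    (ν : ℕ → (Fin n → ℝ))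
    (hortho : ∀ i ∈ Finset.Icc 1 n, ∀ j ∈ Finset.Icc 1 n,
      ν i ⬝ᵥ ν j = if i = j then (1 : ℝ) else 0)
    (heig : ∀ i ∈ Finset.Icc 1 n, A.mulVec (ν i) = mu A i • ν i)
    (b : ℝ)
    (hb : IsGreatest {x : ℝ | ∃ i ∈ Finset.Icc 1 n, ∃ j ∈ Finset.Icc 1 n,
      x = |ν i ⬝ᵥ B.mulVec (ν j)|} b)
    (r q : ℕ) (hr : 1 ≤ r) (hrq : r < q) (hq : q ≤ n)
    (hsep : ∀ i ∈ Finset.Icc q n, mu A i < mu A r)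
    (hsum : ∑ i ∈ Finset.Icc q n, b / (mu A r - mu A i) < 1) :
    |mu (A + B) r - mu A r| ≤
      ((q : ℝ) - 1) * b / (1 - ∑ i ∈ Finset.Icc q n, b / (mu A r - mu A i)) := by
  classical
  have hS : (A + B).IsHermitian := hA.1.add hB
  have hrn : r ≤ n := le_trans (le_of_lt hrq) hq
  have hn : 0 < n := by omega
  set s : ℝ := ∑ i ∈ Finset.Icc q n, b / (mu A r - mu A i) with hsdef
  have hb0 : 0 ≤ b := by
    obtain ⟨i, hi, j, hj, hx⟩ := hb.1
    rw [hx]; exact abs_nonneg _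
  have hs0 : 0 ≤ s := by
    refine Finset.sum_nonneg fun i hi => div_nonneg hb0 ?_
    have := hsep i hi; linarith
  have h1s : 0 < 1 - s := by linarith
  -- reindexed eigenvectors
  set ν' : Fin n → Fin n → ℝ := fun i => ν (i.val + 1) with hν'
  have hmem : ∀ i : Fin n, i.val + 1 ∈ Finset.Icc 1 n :=
    fun i => Finset.mem_Icc.mpr ⟨by omega, by omega⟩
  have hortho' : ∀ i j : Fin n, ν' i ⬝ᵥ ν' j = if i = j then (1:ℝ) else 0 := by
    intro i j
    rw [hν']
    simp only []
    rw [hortho _ (hmem i) _ (hmem j)]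
    by_cases h : i = j
    · simp [h]
    · have h2 : i.val + 1 ≠ j.val + 1 := fun hh => h (Fin.ext (by omega))
      simp [h, h2]
      exact fun hh => h (Fin.ext hh)
  have parsv := parseval_dot hn ν' hortho'
  have heig' : ∀ i : Fin n, A *ᵥ ν' i = mu A (i.val + 1) • ν' i := fun i => heig _ (hmem i)
  have hE : ∀ i j : Fin n, |ν' i ⬝ᵥ (B *ᵥ ν' j)| ≤ b := fun i j => hb.2 ⟨_, hmem i, _, hmem j, rfl⟩
  -- transposes
  have htrans : ∀ (M : Matrix (Fin n) (Fin n) ℝ), M.IsHermitian → Mᵀ = M := by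
    intro M hM
    ext i j
    have h2 := congrFun (congrFun hM i) j
    simpa [Matrix.conjTranspose_apply] using h2
  have hAT : Aᵀ = A := htrans A hA.1
  have hBT : Bᵀ = B := htrans B hB
  have hsymmdot : ∀ (M : Matrix (Fin n) (Fin n) ℝ), Mᵀ = M →
      ∀ x y : Fin n → ℝ, x ⬝ᵥ (M *ᵥ y) = (M *ᵥ x) ⬝ᵥ y := by
    intro M hM x y
    conv_lhs => rw [Matrix.dotProduct_mulVec, show M = Mᵀ from hM.symm,
      Matrix.vecMul_transpose]
  -- quadratic form expansions
  have hNdexp : ∀ u : Fin n → ℝ, u ⬝ᵥ u = ∑ i, (ν' i ⬝ᵥ u) ^ 2 := fun u => by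
    rw [parsv u u]; exact Finset.sum_congr rfl fun i _ => (sq _).symm
  have hAexp : ∀ u : Fin n → ℝ, u ⬝ᵥ (A *ᵥ u) = ∑ i, mu A (i.val + 1) * (ν' i ⬝ᵥ u) ^ 2 := by
    intro u
    rw [parsv u (A *ᵥ u)]
    refine Finset.sum_congr rfl fun i _ => ?_
    rw [hsymmdot A hAT (ν' i) u, heig' i, smul_dotProduct, smul_eq_mul]
    ring
  have hBbound : ∀ u : Fin n → ℝ, |u ⬝ᵥ (B *ᵥ u)| ≤ b * (∑ i, |ν' i ⬝ᵥ u|) ^ 2 := by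
    intro u
    have h1 : u ⬝ᵥ (B *ᵥ u) = ∑ i, (ν' i ⬝ᵥ u) * ((B *ᵥ ν' i) ⬝ᵥ u) := by
      rw [parsv u (B *ᵥ u)]
      exact Finset.sum_congr rfl fun i _ => by rw [hsymmdot B hBT (ν' i) u]
    rw [h1]
    calc |∑ i, (ν' i ⬝ᵥ u) * ((B *ᵥ ν' i) ⬝ᵥ u)|
        ≤ ∑ i, |(ν' i ⬝ᵥ u) * ((B *ᵥ ν' i) ⬝ᵥ u)| := Finset.abs_sum_le_sum_abs _ _
      _ ≤ ∑ i, |ν' i ⬝ᵥ u| * (b * ∑ j, |ν' j ⬝ᵥ u|) := by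
          refine Finset.sum_le_sum fun i _ => ?_
          rw [abs_mul]
          refine mul_le_mul_of_nonneg_left ?_ (abs_nonneg _)
          rw [parsv (B *ᵥ ν' i) u]
          calc |∑ j, (ν' j ⬝ᵥ (B *ᵥ ν' i)) * (ν' j ⬝ᵥ u)|
              ≤ ∑ j, |ν' j ⬝ᵥ (B *ᵥ ν' i)| * |ν' j ⬝ᵥ u| := by
                refine (Finset.abs_sum_le_sum_abs _ _).trans ?_
                exact le_of_eq (Finset.sum_congr rfl fun j _ => abs_mul _ _)
            _ ≤ ∑ j, b * |ν' j ⬝ᵥ u| :=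
                Finset.sum_le_sum fun j _ =>
                  mul_le_mul_of_nonneg_right (hE j i) (abs_nonneg _)
            _ = b * ∑ j, |ν' j ⬝ᵥ u| := by rw [Finset.mul_sum]
      _ = b * (∑ i, |ν' i ⬝ᵥ u|) ^ 2 := by rw [← Finset.sum_mul]; ring
  -- eigen data of A + B
  set ε : Fin n → ℝ := fun k => hS.eigenvalues (Tuple.sort hS.eigenvalues k) with hε
  have hεmono : Monotone ε := Tuple.monotone_sort hS.eigenvalues
  set w : Fin n → Fin n → ℝ :=
    fun k => ⇑(hS.eigenvectorBasis (Tuple.sort hS.eigenvalues k)) with hwdef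
  have hweig : ∀ k, (A + B) *ᵥ w k = ε k • w k := fun k => hS.mulVec_eigenvectorBasis _
  have hworth : ∀ k l, w k ⬝ᵥ w l = if k = l then (1:ℝ) else 0 := by
    have honb := hS.eigenvectorBasis.orthonormal
    rw [orthonormal_iff_ite] at honb
    intro k l
    have h2 := honb (Tuple.sort hS.eigenvalues k) (Tuple.sort hS.eigenvalues l)
    have hinner : ∀ x y : EuclideanSpace ℝ (Fin n),
        (inner ℝ x y : ℝ) = (fun i => x i) ⬝ᵥ (fun i => y i) := by
      intro x y
      simp [PiLp.inner_apply, RCLike.inner_apply, dotProduct]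
      exact Finset.sum_congr rfl fun i _ => mul_comm _ _
    rw [hinner] at h2
    rw [hwdef]
    simp only []
    exact h2.trans (by simp [EmbeddingLike.apply_eq_iff_eq])
  have hmuS : mu (A + B) r = ε ⟨n - r, by omega⟩ := mu_eq hS hr hrn
  -- the mu(A, ·) values
  have hμanti : ∀ {a a' : ℕ}, 1 ≤ a → a ≤ a' → a' ≤ n → mu A a' ≤ mu A a :=
    fun h1 h2 h3 => mu_antitone hA.1 h1 h2 h3
  have hsep' : ∀ i : Fin n, q ≤ i.val + 1 → mu A (i.val + 1) < mu A r :=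
    fun i hi => hsep _ (Finset.mem_Icc.mpr ⟨hi, by omega⟩)
  -- reindexing sums over the tail
  have hreind : ∀ F : ℕ → ℝ,
      ∑ i ∈ Finset.univ.filter (fun i : Fin n => q - 1 ≤ i.val), F (i.val + 1)
        = ∑ j ∈ Finset.Icc q n, F j := by
    intro F
    refine Finset.sum_bij' (fun (i : Fin n) _ => i.val + 1)
      (fun (j : ℕ) (hj : j ∈ Finset.Icc q n) => (⟨j - 1, by
        simp only [Finset.mem_Icc] at hj; omega⟩ : Fin n)) ?_ ?_ ?_ ?_ ?_
    · intro i hi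
      simp only [Finset.mem_filter] at hi
      simp only [Finset.mem_Icc]
      omega
    · intro j hj
      simp only [Finset.mem_Icc] at hj
      simp only [Finset.mem_filter]
      refine ⟨Finset.mem_univ _, by omega⟩
    · intro i hi
      ext
      simp only []
      omega
    · intro j hj
      simp only [Finset.mem_Icc] at hj
      simp only []
      omega
    · intro i hi
      rfl
  -- ==================== upper bound ====================
  have upper : mu (A + B) r - mu A r ≤ ((q:ℝ) - 1) * b / (1 - s) := by
    set K : Finset (Fin n) := Finset.univ.filter (fun k : Fin n => n - r ≤ k.val) with hK
    set J : Finset (Fin n) := Finset.univ.filter (fun j : Fin n => j.val < r - 1) with hJ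
    have hKcard : K.card = r := by
      rw [hK, Finset.filter_congr (fun k _ =>
        show (n - r ≤ k.val) ↔ (n - r ≤ k.val ∧ k.val < n) from
          ⟨fun h => ⟨h, k.isLt⟩, fun h => h.1⟩)]
      rw [card_filter_interval (n - r) n le_rfl]
      omega
    have hJcard : J.card = r - 1 := by
      rw [hJ, Finset.filter_congr (fun k _ =>
        show (k.val < r - 1) ↔ (0 ≤ k.val ∧ k.val < r - 1) from by omega)]
      rw [card_filter_interval 0 (r - 1) (by omega)]
      omega
    obtain ⟨u, hupos, hcons, hlow⟩ := aux_test (A + B) w ε K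
      (fun k _ l _ => hworth k l) (fun k _ => hweig k) ν' J
      (by rw [hKcard, hJcard]; omega) (mu (A + B) r)
      (fun k hk => by
        rw [hmuS]
        refine hεmono ?_
        rw [hK] at hk
        simp only [Finset.mem_filter] at hk
        show (⟨n - r, by omega⟩ : Fin n) ≤ k
        rw [Fin.le_def]
        exact hk.2)
    set d : Fin n → ℝ := fun i => ν' i ⬝ᵥ u with hd
    set N : ℝ := u ⬝ᵥ u with hNdef
    have hNpos : 0 < N := hupos
    have hdzero : ∀ i : Fin n, i.val < r - 1 → d i = 0 := fun i hi =>
      hcons i (by rw [hJ]; simp only [Finset.mem_filter]; exact ⟨Finset.mem_univ _, hi⟩)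
    set Mset : Finset (Fin n) :=
      Finset.univ.filter (fun i : Fin n => r - 1 ≤ i.val ∧ i.val < q - 1) with hMset
    set Tset : Finset (Fin n) := Finset.univ.filter (fun i : Fin n => q - 1 ≤ i.val) with hTset
    have split : ∀ f : Fin n → ℝ, (∀ i : Fin n, i.val < r - 1 → f i = 0) →
        ∑ i, f i = ∑ i ∈ Mset, f i + ∑ i ∈ Tset, f i := by
      intro f hf
      rw [← Finset.sum_filter_add_sum_filter_not Finset.univ (fun i : Fin n => q - 1 ≤ i.val) f]
      have h1 : ∑ i ∈ Finset.univ.filter (fun i : Fin n => ¬ q - 1 ≤ i.val), f i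
          = ∑ i ∈ Mset, f i := by
        refine (Finset.sum_subset ?_ ?_).symm
        · intro i hi
          rw [hMset] at hi
          simp only [Finset.mem_filter, Finset.mem_univ, true_and] at hi ⊢
          omega
        · intro i hi hni
          rw [hMset] at hni
          simp only [Finset.mem_filter, Finset.mem_univ, true_and] at hi hni
          exact hf i (by omega)
      rw [h1, add_comm]
    have hNsplit : ∑ i ∈ Mset, d i ^ 2 + ∑ i ∈ Tset, d i ^ 2 = N := by
      rw [← split (fun i => d i ^ 2) (fun i hi => by
        show d i ^ 2 = 0
        rw [hdzero i hi]; ring)]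
      rw [hNdef, hNdexp u]
    have hTpos : ∀ i ∈ Tset, 0 < mu A r - mu A (i.val + 1) := by
      intro i hi
      rw [hTset] at hi
      simp only [Finset.mem_filter, Finset.mem_univ, true_and] at hi
      have := hsep' i (by omega)
      linarith
    set G : ℝ := ∑ i ∈ Tset, (mu A r - mu A (i.val + 1)) * d i ^ 2 with hG
    have hG0 : 0 ≤ G :=
      Finset.sum_nonneg fun i hi => mul_nonneg (hTpos i hi).le (sq_nonneg _)
    set x : ℝ := ∑ i ∈ Mset, |d i| with hx
    set Y : ℝ := ∑ i ∈ Tset, |d i| with hY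
    have hx0 : 0 ≤ x := Finset.sum_nonneg fun i _ => abs_nonneg _
    have hY0 : 0 ≤ Y := Finset.sum_nonneg fun i _ => abs_nonneg _
    have hApart : u ⬝ᵥ (A *ᵥ u) ≤ mu A r * N - G := by
      rw [hAexp u]
      rw [split (fun i => mu A (i.val + 1) * (ν' i ⬝ᵥ u) ^ 2)
        (fun i hi => by
          show mu A (i.val + 1) * (ν' i ⬝ᵥ u) ^ 2 = 0
          rw [show (ν' i ⬝ᵥ u) = d i from rfl, hdzero i hi]; ring)]
      have h2 : ∑ i ∈ Mset, mu A (i.val + 1) * d i ^ 2 ≤ ∑ i ∈ Mset, mu A r * d i ^ 2 := by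
        refine Finset.sum_le_sum fun i hi => ?_
        rw [hMset] at hi
        simp only [Finset.mem_filter, Finset.mem_univ, true_and] at hi
        exact mul_le_mul_of_nonneg_right (hμanti hr (by omega) (by omega)) (sq_nonneg _)
      have h3 : ∑ i ∈ Tset, mu A (i.val + 1) * d i ^ 2
          = ∑ i ∈ Tset, mu A r * d i ^ 2 - G := by
        rw [hG, ← Finset.sum_sub_distrib]
        exact Finset.sum_congr rfl fun i hi => by ring
      have h5 : ∑ i ∈ Mset, mu A r * d i ^ 2 + ∑ i ∈ Tset, mu A r * d i ^ 2 = mu A r * N := by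
        rw [← Finset.mul_sum, ← Finset.mul_sum, ← mul_add, hNsplit]
      linarith [h2, h3, h5]
    have habs : ∑ i, |ν' i ⬝ᵥ u| = x + Y := by
      rw [hx, hY, ← split (fun i => |d i|) (fun i hi => by
        show |d i| = 0
        rw [hdzero i hi]; exact abs_zero)]
    have hBpart : u ⬝ᵥ (B *ᵥ u) ≤ b * (x + Y) ^ 2 := by
      have h2 := hBbound u
      rw [habs] at h2
      exact (le_abs_self _).trans h2
    have hMcard : (Mset.card : ℝ) = (q:ℝ) - r := by
      rw [hMset, card_filter_interval (r - 1) (q - 1) (by omega)]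
      rw [show q - 1 - (r - 1) = q - r from by omega, Nat.cast_sub (le_of_lt hrq)]
    have hxsq : x ^ 2 ≤ ((q:ℝ) - r) * ∑ i ∈ Mset, d i ^ 2 := by
      have h4 := sq_sum_le_card_mul_sum_sq (s := Mset) (f := fun i => |d i|)
      simp only [sq_abs] at h4
      rw [hx]
      rw [← hMcard]
      exact h4
    have hssplit : ∑ i ∈ Tset, b / (mu A r - mu A (i.val + 1)) = s := by
      rw [hsdef, ← hreind (fun j => b / (mu A r - mu A j)), hTset]
    have hbY : b * Y ^ 2 ≤ s * G := by
      have hcs := Finset.sum_sq_le_sum_mul_sum_of_sq_eq_mul Tset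
        (r := fun i => |d i|)
        (f := fun i => 1 / (mu A r - mu A (i.val + 1)))
        (g := fun i => (mu A r - mu A (i.val + 1)) * d i ^ 2)
        (fun i hi => div_nonneg zero_le_one (hTpos i hi).le)
        (fun i hi => mul_nonneg (hTpos i hi).le (sq_nonneg _))
        (fun i hi => by
          show |d i| ^ 2 = 1 / (mu A r - mu A (i.val + 1)) * ((mu A r - mu A (i.val + 1)) * d i ^ 2)
          rw [sq_abs, ← mul_assoc, one_div_mul_cancel (ne_of_gt (hTpos i hi)), one_mul])
      have hfact : b * (∑ i ∈ Tset, 1 / (mu A r - mu A (i.val + 1)))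
          = ∑ i ∈ Tset, b / (mu A r - mu A (i.val + 1)) := by
        rw [Finset.mul_sum]
        exact Finset.sum_congr rfl fun i hi => by rw [mul_one_div]
      calc b * Y ^ 2
          ≤ b * ((∑ i ∈ Tset, 1 / (mu A r - mu A (i.val + 1))) * G) := by
            rw [hY]
            exact mul_le_mul_of_nonneg_left hcs hb0
        _ = (b * (∑ i ∈ Tset, 1 / (mu A r - mu A (i.val + 1)))) * G := by ring
        _ = s * G := by rw [hfact, hssplit]
    have hlow' : mu (A + B) r * N ≤ mu A r * N - G + b * (x + Y) ^ 2 := by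
      have hsp2 : u ⬝ᵥ ((A + B) *ᵥ u) = u ⬝ᵥ (A *ᵥ u) + u ⬝ᵥ (B *ᵥ u) := by
        rw [Matrix.add_mulVec, dotProduct_add]
      rw [hsp2] at hlow
      linarith [hApart, hBpart]
    have hkey : b * (x + Y) ^ 2 ≤ b * x ^ 2 / (1 - s) + G := by
      rw [div_add' _ _ _ (ne_of_gt h1s), le_div_iff₀ h1s]
      rcases eq_or_lt_of_le hs0 with hs|hs
      · have h1 : b * Y ^ 2 = 0 := le_antisymm (by rw [← hs] at hbY; linarith) (by positivity)
        by_cases hYz : Y = 0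
        · rw [hYz]
          nlinarith [hG0, mul_nonneg hb0 (sq_nonneg x)]
        · have hb' : b = 0 := by
            have h2 : 0 < Y ^ 2 := by positivity
            nlinarith
          rw [hb']
          nlinarith [hG0]
      · nlinarith [mul_nonneg hb0 (sq_nonneg (s * x - (1 - s) * Y)), hbY, hs, h1s,
          mul_pos hs h1s, mul_nonneg (mul_nonneg hs0 hb0) (sq_nonneg x),
          mul_nonneg hb0 (sq_nonneg Y), mul_nonneg hs0 hG0]
    have hxN : b * x ^ 2 ≤ ((q:ℝ) - 1) * b * N := by
      have h6 : ∑ i ∈ Mset, d i ^ 2 ≤ N := by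
        have h7 : (0:ℝ) ≤ ∑ i ∈ Tset, d i ^ 2 := Finset.sum_nonneg fun i _ => sq_nonneg _
        linarith [hNsplit]
      have hqr : (0:ℝ) ≤ (q:ℝ) - r := by
        rw [sub_nonneg]
        exact_mod_cast le_of_lt hrq
      have h8 : x ^ 2 ≤ ((q:ℝ) - r) * N := hxsq.trans (mul_le_mul_of_nonneg_left h6 hqr)
      have hr1 : (1:ℝ) ≤ (r:ℝ) := by exact_mod_cast hr
      nlinarith [mul_le_mul_of_nonneg_left h8 hb0, mul_nonneg hb0 hNpos.le]
    have hfin : (mu (A + B) r - mu A r) * N ≤ (((q:ℝ) - 1) * b / (1 - s)) * N := by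
      have h9 : (mu (A + B) r - mu A r) * N ≤ b * x ^ 2 / (1 - s) := by
        have h10 : (mu (A + B) r - mu A r) * N ≤ b * (x + Y) ^ 2 - G := by
          nlinarith [hlow']
        linarith [hkey]
      refine h9.trans ?_
      calc b * x ^ 2 / (1 - s) ≤ (((q:ℝ) - 1) * b * N) / (1 - s) :=
            (div_le_div_iff_of_pos_right h1s).mpr hxN
        _ = (((q:ℝ) - 1) * b / (1 - s)) * N := by ring
    exact le_of_mul_le_mul_right hfin hNpos
  -- ==================== lower bound ====================
  have lower : mu A r - mu (A + B) r ≤ ((q:ℝ) - 1) * b / (1 - s) := by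
    set K : Finset (Fin n) := Finset.univ.filter (fun k : Fin n => k.val < n - r + 1) with hK
    set J : Finset (Fin n) := Finset.univ.filter (fun j : Fin n => r ≤ j.val) with hJ
    have hKcard : K.card = n - r + 1 := by
      rw [hK, Finset.filter_congr (fun k _ =>
        show (k.val < n - r + 1) ↔ (0 ≤ k.val ∧ k.val < n - r + 1) from by omega)]
      rw [card_filter_interval 0 (n - r + 1) (by omega)]
      omega
    have hJcard : J.card = n - r := by
      rw [hJ, Finset.filter_congr (fun k _ =>
        show (r ≤ k.val) ↔ (r ≤ k.val ∧ k.val < n) from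
          ⟨fun h => ⟨h, k.isLt⟩, fun h => h.1⟩)]
      rw [card_filter_interval r n le_rfl]
    obtain ⟨u, hupos, hcons, hlow⟩ := aux_test (-(A + B)) w (fun k => -ε k) K
      (fun k _ l _ => hworth k l)
      (fun k _ => by rw [Matrix.neg_mulVec, hweig k, neg_smul])
      ν' J (by rw [hKcard, hJcard]; omega) (-(mu (A + B) r))
      (fun k hk => by
        rw [hmuS]
        simp only [neg_le_neg_iff]
        refine hεmono ?_
        rw [hK] at hk
        simp only [Finset.mem_filter] at hk
        show k ≤ (⟨n - r, by omega⟩ : Fin n)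
        rw [Fin.le_def]
        simp only []
        omega)
    set d : Fin n → ℝ := fun i => ν' i ⬝ᵥ u with hd
    set N : ℝ := u ⬝ᵥ u with hNdef
    have hNpos : 0 < N := hupos
    have hdzero : ∀ i : Fin n, r ≤ i.val → d i = 0 := fun i hi =>
      hcons i (by rw [hJ]; simp only [Finset.mem_filter]; exact ⟨Finset.mem_univ _, hi⟩)
    have hup : u ⬝ᵥ ((A + B) *ᵥ u) ≤ mu (A + B) r * N := by
      have h1 : u ⬝ᵥ ((-(A + B)) *ᵥ u) = -(u ⬝ᵥ ((A + B) *ᵥ u)) := by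
        rw [Matrix.neg_mulVec, dotProduct_neg]
      rw [h1] at hlow
      linarith
    have hApart : mu A r * N ≤ u ⬝ᵥ (A *ᵥ u) := by
      rw [hAexp u, hNdef, hNdexp u, Finset.mul_sum]
      refine Finset.sum_le_sum fun i _ => ?_
      by_cases hi : r ≤ i.val
      · rw [show (ν' i ⬝ᵥ u) = d i from rfl, hdzero i hi]
        simp
      · push_neg at hi
        exact mul_le_mul_of_nonneg_right (hμanti (by omega) (by omega) hrn) (sq_nonneg _)
    set R : Finset (Fin n) := Finset.univ.filter (fun i : Fin n => i.val < r) with hR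
    have habs : ∑ i, |ν' i ⬝ᵥ u| = ∑ i ∈ R, |d i| := by
      refine (Finset.sum_subset (Finset.filter_subset _ _) ?_).symm
      intro i _ hni
      simp only [Finset.mem_filter, Finset.mem_univ, true_and] at hni
      rw [show |ν' i ⬝ᵥ u| = |d i| from rfl, hdzero i (by omega)]
      exact abs_zero
    have hrcard : (R.card : ℝ) = (r : ℝ) := by
      rw [hR, Finset.filter_congr (fun k _ =>
        show (k.val < r) ↔ (0 ≤ k.val ∧ k.val < r) from by omega)]
      rw [card_filter_interval 0 r hrn]
      norm_num
    have hBpart : -(b * ((r:ℝ) * N)) ≤ u ⬝ᵥ (B *ᵥ u) := by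
      have h2 := hBbound u
      have h3 : (∑ i, |ν' i ⬝ᵥ u|) ^ 2 ≤ (r:ℝ) * N := by
        rw [habs]
        have h4 := sq_sum_le_card_mul_sum_sq (s := R) (f := fun i => |d i|)
        simp only [sq_abs] at h4
        refine h4.trans ?_
        have h5 : ∑ i ∈ R, d i ^ 2 ≤ N := by
          rw [hNdef, hNdexp u]
          exact Finset.sum_le_sum_of_subset_of_nonneg (Finset.subset_univ R)
            (fun i _ _ => sq_nonneg _)
        calc (R.card : ℝ) * ∑ i ∈ R, d i ^ 2 ≤ (R.card : ℝ) * N := by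
              exact mul_le_mul_of_nonneg_left h5 (Nat.cast_nonneg _)
          _ = (r : ℝ) * N := by rw [hrcard]
      have h5 : |u ⬝ᵥ (B *ᵥ u)| ≤ b * ((r:ℝ) * N) :=
        h2.trans (mul_le_mul_of_nonneg_left h3 hb0)
      have h6 := neg_abs_le (u ⬝ᵥ (B *ᵥ u))
      linarith
    have h7 : (mu A r - mu (A + B) r) * N ≤ ((r:ℝ) * b) * N := by
      have hsp2 : u ⬝ᵥ ((A + B) *ᵥ u) = u ⬝ᵥ (A *ᵥ u) + u ⬝ᵥ (B *ᵥ u) := by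
        rw [Matrix.add_mulVec, dotProduct_add]
      rw [hsp2] at hup
      nlinarith [hup, hApart, hBpart]
    have h8 : mu A r - mu (A + B) r ≤ (r:ℝ) * b := le_of_mul_le_mul_right h7 hNpos
    have h9 : (r:ℝ) * b ≤ ((q:ℝ) - 1) * b := by
      have h10 : (r:ℝ) ≤ (q:ℝ) - 1 := by
        have h11 : (r:ℝ) + 1 ≤ (q:ℝ) := by exact_mod_cast hrq
        linarith
      exact mul_le_mul_of_nonneg_right h10 hb0
    have h12 : ((q:ℝ) - 1) * b ≤ ((q:ℝ) - 1) * b / (1 - s) := by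
      rw [le_div_iff₀ h1s]
      have hq1 : (0:ℝ) ≤ (q:ℝ) - 1 := by
        have : (1:ℝ) ≤ (q:ℝ) := by exact_mod_cast (by omega : 1 ≤ q)
        linarith
      nlinarith [mul_nonneg hq1 hb0, hs0]
    linarith
  rw [abs_sub_le_iff]
  exact ⟨upper, lower⟩
end

section
/- Let A and B be symmetric n×n matrices. Let ν_1,…,ν_n be orthonormal eigenvectors of A with A ν_i = μ_i(A) ν_i and μ_1(A) ≥ … ≥ μ_n(A), let ν̃_1,…,ν̃_n be orthonormal eigenvectors of A+B with (A+B) ν̃_i = μ_i(A+B) ν̃_i, and set b = max_{i,j=1,…,n} |ν_i' B ν_j|. Let q < n and suppose |μ_i(A+B) − μ_i(A)| ≤ c₁ for all i ∈ {1,…,q+1}. Then Σ_{i=1}^{q} [μ_i(A) − μ_{q+1}(A)]·[1 − Σ_{r=1}^{q} (ν_r' ν̃_i)²] ≤ q(b + c₁). -/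
open Matrix MeasureTheory
open scoped BigOperators

/-- `mu` is antitone on `{1,…,n}` for a Hermitian matrix. -/
lemma mu_anti' {n : ℕ} {S : Matrix (Fin n) (Fin n) ℝ} (hS : S.IsHermitian)
    {r s : ℕ} (h1 : 1 ≤ r) (hrs : r ≤ s) (hsn : s ≤ n) : mu S s ≤ mu S r := by
  have hr : S.IsHermitian ∧ 1 ≤ r ∧ r ≤ n := ⟨hS, h1, hrs.trans hsn⟩
  have hs : S.IsHermitian ∧ 1 ≤ s ∧ s ≤ n := ⟨hS, h1.trans hrs, hsn⟩
  rw [mu, dif_pos hs, mu, dif_pos hr]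
  exact Tuple.monotone_sort _ (by rw [Fin.rev_le_rev]; exact Fin.mk_le_mk.mpr (by omega))

/-- With A, B symmetric, ν (resp. ν̃) orthonormal eigenvectors of A
(resp. A+B) for the decreasingly ordered eigenvalues, b = max_{i,j} |ν_i' B ν_j|, q < n and
|μ_i(A+B) − μ_i(A)| ≤ c₁ for i ≤ q+1:
Σ_{i=1}^{q} [μ_i(A) − μ_{q+1}(A)]·[1 − Σ_{r=1}^{q} (ν_r'ν̃_i)²] ≤ q(b + c₁). -/
theorem statement13 {n : ℕ} (A B : Matrix (Fin n) (Fin n) ℝ)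
    (hA : A.IsHermitian) (hB : B.IsHermitian)
    (ν νt : ℕ → (Fin n → ℝ))
    (hortho : ∀ i ∈ Finset.Icc 1 n, ∀ j ∈ Finset.Icc 1 n,
      ν i ⬝ᵥ ν j = if i = j then (1 : ℝ) else 0)
    (heig : ∀ i ∈ Finset.Icc 1 n, A.mulVec (ν i) = mu A i • ν i)
    (horthot : ∀ i ∈ Finset.Icc 1 n, ∀ j ∈ Finset.Icc 1 n,
      νt i ⬝ᵥ νt j = if i = j then (1 : ℝ) else 0)
    (heigt : ∀ i ∈ Finset.Icc 1 n, (A + B).mulVec (νt i) = mu (A + B) i • νt i)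
    (b : ℝ)
    (hb : IsGreatest {x : ℝ | ∃ i ∈ Finset.Icc 1 n, ∃ j ∈ Finset.Icc 1 n,
      x = |ν i ⬝ᵥ B.mulVec (ν j)|} b)
    (q : ℕ) (hq : q < n)
    (c₁ : ℝ)
    (hc₁ : ∀ i ∈ Finset.Icc 1 (q + 1), |mu (A + B) i - mu A i| ≤ c₁) :
    ∑ i ∈ Finset.Icc 1 q,
        (mu A i - mu A (q + 1)) * (1 - ∑ r ∈ Finset.Icc 1 q, (ν r ⬝ᵥ νt i) ^ 2) ≤
      (q : ℝ) * (b + c₁) := by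
  have hAB : (A + B).IsHermitian := hA.add hB
  have hABt : (A + B)ᵀ = A + B := by
    have h := hAB.eq
    rwa [Matrix.conjTranspose_eq_transpose_of_trivial] at h
  -- expansion lemma
  have hexp : ∀ v w : Fin n → ℝ,
      v ⬝ᵥ w = ∑ i ∈ Finset.Icc 1 n, (νt i ⬝ᵥ v) * (νt i ⬝ᵥ w) := by
    set V : Matrix (Fin n) (Fin n) ℝ := Matrix.of (fun i a => νt (i.1 + 1) a) with hV
    have hmem : ∀ i : Fin n, i.1 + 1 ∈ Finset.Icc 1 n := fun i =>
      Finset.mem_Icc.mpr ⟨Nat.le_add_left 1 i.1, i.isLt⟩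
    have hVVt : V * Vᵀ = 1 := by
      ext i j
      have h := horthot (i.1 + 1) (hmem i) (j.1 + 1) (hmem j)
      simp only [Matrix.mul_apply, Matrix.transpose_apply, hV, Matrix.of_apply,
        Matrix.one_apply]
      rw [show (∑ k, νt (i.1+1) k * νt (j.1+1) k) = νt (i.1+1) ⬝ᵥ νt (j.1+1) from rfl, h]
      simp [Fin.ext_iff]
    have hVtV : Vᵀ * V = 1 := mul_eq_one_comm.mp hVVt
    intro v w
    have key : (V *ᵥ v) ⬝ᵥ (V *ᵥ w) = v ⬝ᵥ w := by
      rw [Matrix.dotProduct_mulVec, ← Matrix.mulVec_transpose, Matrix.mulVec_mulVec, hVtV,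
        Matrix.one_mulVec]
    have reidx : ∑ i ∈ Finset.Icc 1 n, (νt i ⬝ᵥ v) * (νt i ⬝ᵥ w)
        = ∑ i : Fin n, (νt (i.1+1) ⬝ᵥ v) * (νt (i.1+1) ⬝ᵥ w) := by
      rw [show Finset.Icc 1 n = Finset.Ico 1 (n+1) by rw [Finset.Ico_add_one_right_eq_Icc]]
      rw [Finset.sum_Ico_eq_sum_range, Nat.add_sub_cancel,
        ← Fin.sum_univ_eq_sum_range (fun i => (νt (1+i) ⬝ᵥ v) * (νt (1+i) ⬝ᵥ w)) n]
      simp [add_comm]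
    rw [reidx, ← key]
    rfl
  -- eigen-dot fact
  have hdot : ∀ i ∈ Finset.Icc 1 n, ∀ v : Fin n → ℝ,
      νt i ⬝ᵥ ((A + B) *ᵥ v) = mu (A + B) i * (νt i ⬝ᵥ v) := by
    intro i hi v
    rw [Matrix.dotProduct_mulVec, ← Matrix.mulVec_transpose, hABt, heigt i hi]
    simp [smul_dotProduct, smul_eq_mul]
  -- splitting sums
  have hsplit : ∀ f : ℕ → ℝ, ∑ i ∈ Finset.Icc 1 n, f i
      = ∑ i ∈ Finset.Icc 1 q, f i + ∑ i ∈ Finset.Ioc q n, f i := by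
    intro f
    rw [show Finset.Icc 1 n = Finset.Ioc 0 n from Finset.Icc_add_one_left_eq_Ioc 0 n,
      show Finset.Icc 1 q = Finset.Ioc 0 q from Finset.Icc_add_one_left_eq_Ioc 0 q,
      Finset.sum_Ioc_consecutive f (Nat.zero_le q) hq.le]
  have hq1 : mu (A + B) (q+1) ≤ mu A (q+1) + c₁ := by
    have h := abs_le.mp (hc₁ (q+1) (Finset.mem_Icc.mpr ⟨by omega, le_rfl⟩))
    linarith [h.2]
  -- key per-r inequality
  have key : ∀ r ∈ Finset.Icc 1 q,
      mu A r - (∑ i ∈ Finset.Icc 1 q, mu A i * (νt i ⬝ᵥ ν r) ^ 2)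
        - mu A (q+1) * (1 - ∑ i ∈ Finset.Icc 1 q, (νt i ⬝ᵥ ν r) ^ 2) ≤ b + c₁ := by
    intro r hr
    have hrq := Finset.mem_Icc.mp hr
    have hrn : r ∈ Finset.Icc 1 n := Finset.mem_Icc.mpr ⟨hrq.1, by omega⟩
    have hsum1 : ∑ i ∈ Finset.Icc 1 n, (νt i ⬝ᵥ ν r) ^ 2 = 1 := by
      have h := hexp (ν r) (ν r)
      rw [hortho r hrn r hrn, if_pos rfl] at h
      simpa [pow_two] using h.symm
    have ht_nonneg : (0:ℝ) ≤ ∑ i ∈ Finset.Ioc q n, (νt i ⬝ᵥ ν r) ^ 2 :=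
      Finset.sum_nonneg fun i _ => sq_nonneg _
    have htail_eq : ∑ i ∈ Finset.Ioc q n, (νt i ⬝ᵥ ν r) ^ 2
        = 1 - ∑ i ∈ Finset.Icc 1 q, (νt i ⬝ᵥ ν r) ^ 2 := by
      have h := hsplit (fun i => (νt i ⬝ᵥ ν r) ^ 2)
      rw [hsum1] at h
      linarith
    have hsum2 : mu A r + (ν r ⬝ᵥ (B *ᵥ ν r))
        = ∑ i ∈ Finset.Icc 1 n, mu (A + B) i * (νt i ⬝ᵥ ν r) ^ 2 := by
      have e1 : ν r ⬝ᵥ ((A + B) *ᵥ ν r) = mu A r + ν r ⬝ᵥ (B *ᵥ ν r) := by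
        rw [Matrix.add_mulVec, dotProduct_add, heig r hrn, dotProduct_smul,
          hortho r hrn r hrn, if_pos rfl]
        simp [smul_eq_mul]
      have e2 := hexp (ν r) ((A + B) *ᵥ ν r)
      rw [e1] at e2
      rw [e2]
      refine Finset.sum_congr rfl fun i hi => ?_
      rw [hdot i hi]
      ring
    have htail_le : ∑ i ∈ Finset.Ioc q n, mu (A + B) i * (νt i ⬝ᵥ ν r) ^ 2
        ≤ mu (A + B) (q+1) * (1 - ∑ i ∈ Finset.Icc 1 q, (νt i ⬝ᵥ ν r) ^ 2) := by
      calc ∑ i ∈ Finset.Ioc q n, mu (A + B) i * (νt i ⬝ᵥ ν r) ^ 2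
          ≤ ∑ i ∈ Finset.Ioc q n, mu (A + B) (q+1) * (νt i ⬝ᵥ ν r) ^ 2 := by
            refine Finset.sum_le_sum fun i hi => ?_
            have hi' := Finset.mem_Ioc.mp hi
            exact mul_le_mul_of_nonneg_right
              (mu_anti' hAB (by omega) (by omega) hi'.2) (sq_nonneg _)
        _ = _ := by rw [← Finset.mul_sum, htail_eq]
    have hhead_le : ∑ i ∈ Finset.Icc 1 q, mu (A + B) i * (νt i ⬝ᵥ ν r) ^ 2
        ≤ (∑ i ∈ Finset.Icc 1 q, mu A i * (νt i ⬝ᵥ ν r) ^ 2)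
          + c₁ * ∑ i ∈ Finset.Icc 1 q, (νt i ⬝ᵥ ν r) ^ 2 := by
      calc ∑ i ∈ Finset.Icc 1 q, mu (A + B) i * (νt i ⬝ᵥ ν r) ^ 2
          ≤ ∑ i ∈ Finset.Icc 1 q, (mu A i + c₁) * (νt i ⬝ᵥ ν r) ^ 2 := by
            refine Finset.sum_le_sum fun i hi => ?_
            have hi' := Finset.mem_Icc.mp hi
            have h := abs_le.mp (hc₁ i (Finset.mem_Icc.mpr ⟨hi'.1, by omega⟩))
            exact mul_le_mul_of_nonneg_right (by linarith [h.2]) (sq_nonneg _)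
        _ = _ := by simp [add_mul, Finset.sum_add_distrib, Finset.mul_sum]
    have hBb : -b ≤ ν r ⬝ᵥ (B *ᵥ ν r) := by
      have hmemset : |ν r ⬝ᵥ B.mulVec (ν r)| ∈ {x : ℝ | ∃ i ∈ Finset.Icc 1 n,
          ∃ j ∈ Finset.Icc 1 n, x = |ν i ⬝ᵥ B.mulVec (ν j)|} := ⟨r, hrn, r, hrn, rfl⟩
      have h := hb.2 hmemset
      linarith [(abs_le.mp h).1]
    have hone : (0:ℝ) ≤ 1 - ∑ i ∈ Finset.Icc 1 q, (νt i ⬝ᵥ ν r) ^ 2 := by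
      rw [← htail_eq]; exact ht_nonneg
    have hm : mu (A + B) (q+1) * (1 - ∑ i ∈ Finset.Icc 1 q, (νt i ⬝ᵥ ν r) ^ 2)
        ≤ (mu A (q+1) + c₁) * (1 - ∑ i ∈ Finset.Icc 1 q, (νt i ⬝ᵥ ν r) ^ 2) :=
      mul_le_mul_of_nonneg_right hq1 hone
    have hsplit2 := hsplit (fun i => mu (A + B) i * (νt i ⬝ᵥ ν r) ^ 2)
    have hring : (mu A (q+1) + c₁) * (1 - ∑ i ∈ Finset.Icc 1 q, (νt i ⬝ᵥ ν r) ^ 2)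
        = mu A (q+1) * (1 - ∑ i ∈ Finset.Icc 1 q, (νt i ⬝ᵥ ν r) ^ 2)
          + c₁ * (1 - ∑ i ∈ Finset.Icc 1 q, (νt i ⬝ᵥ ν r) ^ 2) := by ring
    have hring2 : c₁ * (∑ i ∈ Finset.Icc 1 q, (νt i ⬝ᵥ ν r) ^ 2)
        + c₁ * (1 - ∑ i ∈ Finset.Icc 1 q, (νt i ⬝ᵥ ν r) ^ 2) = c₁ := by ring
    linarith
  -- sum it up
  have main := Finset.sum_le_sum key
  rw [Finset.sum_const, Nat.card_Icc, Nat.add_sub_cancel] at main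
  -- rewrite the goal with commuted dot products
  have hcomm : ∀ i r : ℕ, (ν r ⬝ᵥ νt i) ^ 2 = (νt i ⬝ᵥ ν r) ^ 2 := fun i r => by
    rw [dotProduct_comm]
  simp only [hcomm]
  -- the algebraic identity
  have hEq : ∑ i ∈ Finset.Icc 1 q,
        (mu A i - mu A (q + 1)) * (1 - ∑ r ∈ Finset.Icc 1 q, (νt i ⬝ᵥ ν r) ^ 2)
      = ∑ r ∈ Finset.Icc 1 q,
        (mu A r - (∑ i ∈ Finset.Icc 1 q, mu A i * (νt i ⬝ᵥ ν r) ^ 2)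
          - mu A (q+1) * (1 - ∑ i ∈ Finset.Icc 1 q, (νt i ⬝ᵥ ν r) ^ 2)) := by
    have s1 : ∑ i ∈ Finset.Icc 1 q, ∑ r ∈ Finset.Icc 1 q, mu A i * (νt i ⬝ᵥ ν r) ^ 2
        = ∑ r ∈ Finset.Icc 1 q, ∑ i ∈ Finset.Icc 1 q, mu A i * (νt i ⬝ᵥ ν r) ^ 2 :=
      Finset.sum_comm
    have s2 : ∑ i ∈ Finset.Icc 1 q, ∑ r ∈ Finset.Icc 1 q, mu A (q+1) * (νt i ⬝ᵥ ν r) ^ 2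
        = ∑ r ∈ Finset.Icc 1 q, ∑ i ∈ Finset.Icc 1 q, mu A (q+1) * (νt i ⬝ᵥ ν r) ^ 2 :=
      Finset.sum_comm
    simp only [mul_sub, sub_mul, mul_one, one_mul, Finset.sum_sub_distrib, Finset.mul_sum]
    rw [s1, s2]
    ring
  rw [hEq]
  calc ∑ r ∈ Finset.Icc 1 q,
        (mu A r - (∑ i ∈ Finset.Icc 1 q, mu A i * (νt i ⬝ᵥ ν r) ^ 2)
          - mu A (q+1) * (1 - ∑ i ∈ Finset.Icc 1 q, (νt i ⬝ᵥ ν r) ^ 2))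
      ≤ q • (b + c₁) := main
    _ = (q : ℝ) * (b + c₁) := by simp [nsmul_eq_mul]; ring
end
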